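/- arXiv:1806.03823 — 3 statements merged into one kernel-verified Lean document; each statement's English description precedes it below -/
import Mathlib

section
/- For d ≥ 1 and 1 ≤ j ≤ d, the polynomial identity (1+t)^{d−1} A_{d,j}(t) = B^+_{d,j}(t²) + (1/t) B^−_{d,j}(t²) holds, where A_{d,j}(t) is the type-A j-Eulerian polynomial. -/
/-- The signed value at position `i` of `f : Fin d → Fin d × Bool`. -/
def BVal (d : ℕ) (f : Fin d → Fin d × Bool) (i : Fin d) : ℤ :=
  if (f i).2 then ((f i).1 : ℤ) + 1 else -(((f i).1 : ℤ) + 1)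

/-- `σ_{k+1}` in one-line notation (`k` is `0`-based); `0` out of range. -/
def sval (d : ℕ) (f : Fin d → Fin d × Bool) (k : ℕ) : ℤ :=
  if h : k < d then BVal d f ⟨k, h⟩ else 0

/-- `f` encodes a signed permutation of `{1,…,d}`. -/
def IsSignedPerm (d : ℕ) (f : Fin d → Fin d × Bool) : Prop :=
  Function.Injective fun i => (f i).1

instance (d : ℕ) (f : Fin d → Fin d × Bool) : Decidable (IsSignedPerm d f) := by
  unfold IsSignedPerm; infer_instance

/-- The type-B descent number: `|{i ∈ [0,d−1] : σ_i > σ_{i+1}}|` with `σ_0 = 0`. -/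
def desB (d : ℕ) (f : Fin d → Fin d × Bool) : ℕ :=
  ((Finset.range d).filter fun i =>
    sval d f i < if i = 0 then (0 : ℤ) else sval d f (i - 1)).card

/-- Signed permutations with `σ_1 = j` and `σ_d > 0`. -/
def BplusSet (d : ℕ) (j : ℤ) : Finset (Fin d → Fin d × Bool) :=
  Finset.univ.filter fun f => IsSignedPerm d f ∧ sval d f 0 = j ∧ 0 < sval d f (d - 1)

/-- Signed permutations with `σ_1 = j` and `σ_d < 0`. -/
def BminusSet (d : ℕ) (j : ℤ) : Finset (Fin d → Fin d × Bool) :=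
  Finset.univ.filter fun f => IsSignedPerm d f ∧ sval d f 0 = j ∧ sval d f (d - 1) < 0

open Polynomial

/-- The `j`-Eulerian polynomial of type `B^+`:
`B^+_{d,j}(t) = ∑_{σ ∈ B_d, σ_1=j, σ_d>0} t^{des_B(σ)}`. -/
noncomputable def BplusPoly (d : ℕ) (j : ℤ) : Polynomial ℝ :=
  ∑ f ∈ BplusSet d j, X ^ desB d f

/-- The `j`-Eulerian polynomial of type `B^-`:
`B^−_{d,j}(t) = ∑_{σ ∈ B_d, σ_1=j, σ_d<0} t^{des_B(σ)}`. -/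
noncomputable def BminusPoly (d : ℕ) (j : ℤ) : Polynomial ℝ :=
  ∑ f ∈ BminusSet d j, X ^ desB d f

/-- The `j`-Eulerian polynomial of type `B`:
`B_{d,j}(t) = ∑_{σ ∈ B_d, σ_1=j} t^{des_B(σ)}`. -/
noncomputable def BPoly (d : ℕ) (j : ℤ) : Polynomial ℝ :=
  ∑ f ∈ Finset.univ.filter (fun f : Fin d → Fin d × Bool =>
      IsSignedPerm d f ∧ sval d f 0 = j), X ^ desB d f


/-- `σ_{k+1}` of the permutation, as an element of `{1,…,d}` (`0` out of range). -/
def svalA (d : ℕ) (σ : Equiv.Perm (Fin d)) (k : ℕ) : ℕ :=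
  if h : k < d then (σ ⟨k, h⟩ : ℕ) + 1 else 0

/-- The type-A descent number `des_A(σ) = |{i ∈ [d−1] : σ_i > σ_{i+1}}|`. -/
def desA (d : ℕ) (σ : Equiv.Perm (Fin d)) : ℕ :=
  ((Finset.range (d - 1)).filter fun i => svalA d σ (i + 1) < svalA d σ i).card

/-- The `j`-Eulerian polynomial of type A:
`A_{d,j}(t) = ∑_{σ ∈ S_d, σ_1 = j} t^{des_A(σ)}`. -/
noncomputable def APoly (d j : ℕ) : Polynomial ℝ :=
  ∑ σ ∈ Finset.univ.filter (fun σ : Equiv.Perm (Fin d) => svalA d σ 0 = j),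
    X ^ desA d σ

open Finset

namespace SJW

lemma sval_of_lt {d k : ℕ} (f : Fin d → Fin d × Bool) (h : k < d) :
    sval d f k = BVal d f ⟨k, h⟩ := dif_pos h

lemma BVal_ne_zero {d : ℕ} (f : Fin d → Fin d × Bool) (i : Fin d) : BVal d f i ≠ 0 := by
  unfold BVal; split <;> omega

lemma BVal_bounds {d : ℕ} (f : Fin d → Fin d × Bool) (i : Fin d) :
    (1 ≤ BVal d f i ∧ BVal d f i ≤ d) ∨ (-(d:ℤ) ≤ BVal d f i ∧ BVal d f i ≤ -1) := by
  have := (f i).1.isLt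
  unfold BVal; split <;> [left; right] <;> constructor <;> omega

lemma desB_eq_sum (d : ℕ) (f : Fin d → Fin d × Bool) :
    (desB d f : ℤ) = ∑ i ∈ Finset.range d,
      if sval d f i < (if i = 0 then (0 : ℤ) else sval d f (i - 1)) then (1:ℤ) else 0 := by
  unfold desB
  rw [Finset.card_filter]
  push_cast
  rfl

/-- The `H` local statistic. -/
def Hfun (x y : ℤ) : ℤ :=
  (if y < x then 2 else 0) + (if x < 0 then 1 else 0) - (if y < 0 then 1 else 0)

/-- `2 des_B − [σ_d < 0]` as an integer. -/
def EzS (d : ℕ) (f : Fin d → Fin d × Bool) : ℤ :=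
  2 * (desB d f) - (if sval d f (d-1) < 0 then 1 else 0)

lemma EzS_eq_sum (d : ℕ) (hd : 0 < d) (f : Fin d → Fin d × Bool) :
    EzS d f = ∑ i ∈ Finset.range d,
      Hfun (if i = 0 then (0:ℤ) else sval d f (i-1)) (sval d f i) := by
  have tele : ∑ i ∈ Finset.range d,
      ((if (if i = 0 then (0:ℤ) else sval d f (i-1)) < 0 then (1:ℤ) else 0)
        - (if sval d f i < 0 then 1 else 0))
      = 0 - (if sval d f (d-1) < 0 then 1 else 0) := by
    have h := Finset.sum_range_sub'
      (fun i => if (if i = 0 then (0:ℤ) else sval d f (i-1)) < 0 then (1:ℤ) else 0) d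
    simp only [Nat.add_sub_cancel, if_neg (Nat.succ_ne_zero _)] at h
    rw [h]
    have hd' : d ≠ 0 := by omega
    simp [hd']
  unfold Hfun
  rw [Finset.sum_sub_distrib, Finset.sum_add_distrib]
  rw [Finset.sum_sub_distrib] at tele
  have h2 : ∑ i ∈ Finset.range d,
      (if sval d f i < (if i = 0 then (0:ℤ) else sval d f (i-1)) then (2:ℤ) else 0)
      = 2 * (desB d f : ℤ) := by
    rw [desB_eq_sum, Finset.mul_sum]
    refine Finset.sum_congr rfl fun i _ => ?_
    split_ifs <;> ring
  rw [h2]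
  unfold EzS
  omega



lemma sval_props {d k : ℕ} (f : Fin d → Fin d × Bool) (h : k < d) :
    sval d f k ≠ 0 ∧ -(d:ℤ) ≤ sval d f k ∧ sval d f k ≤ d := by
  rw [sval_of_lt f h]
  have h1 := BVal_ne_zero f ⟨k, h⟩
  have h2 := BVal_bounds f ⟨k, h⟩
  rcases h2 with ⟨h2, h3⟩ | ⟨h2, h3⟩ <;> exact ⟨h1, by omega, by omega⟩

lemma desB_pos_of_first_neg {d : ℕ} (f : Fin d → Fin d × Bool) (hd : 0 < d)
    (h : sval d f 0 < 0) : 1 ≤ desB d f := by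
  refine Finset.card_pos.mpr ⟨0, ?_⟩
  simp only [Finset.mem_filter, Finset.mem_range, if_pos rfl]
  exact ⟨hd, h⟩

/-- If the last letter is negative, there is a descent. -/
lemma desB_pos {d : ℕ} (f : Fin d → Fin d × Bool) (hd : 0 < d)
    (h : sval d f (d - 1) < 0) : 1 ≤ desB d f := by
  by_contra hc
  have h0 : desB d f = 0 := by omega
  unfold desB at h0
  rw [Finset.card_eq_zero, Finset.filter_eq_empty_iff] at h0
  have key : ∀ k, k < d → 0 ≤ sval d f k := by
    intro k
    induction k with
    | zero => intro hk; have := h0 (Finset.mem_range.mpr hk); simp at this; omega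
    | succ m ih =>
      intro hk
      have h1 := h0 (Finset.mem_range.mpr hk)
      simp only [Nat.succ_ne_zero, if_false] at h1
      have h2 : 0 ≤ sval d f m := ih (by omega)
      simp only [Nat.add_sub_cancel] at h1
      omega
  have := key (d-1) (by omega)
  omega

/-- The value-level complementation map. -/
def cZ (d : ℕ) (x : ℤ) : ℤ := if 0 < x then x - (d+1) else x + (d+1)

/-- The complementation involution on signed permutations. -/
def cB (d : ℕ) (f : Fin d → Fin d × Bool) : Fin d → Fin d × Bool :=
  fun k => ((f k).1.rev, !(f k).2)

lemma cB_cB {d : ℕ} (f : Fin d → Fin d × Bool) : cB d (cB d f) = f := by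
  funext i
  simp [cB, Fin.rev_rev]

lemma isSignedPerm_cB {d : ℕ} {f : Fin d → Fin d × Bool} (h : IsSignedPerm d f) :
    IsSignedPerm d (cB d f) := by
  intro i k hik
  exact h (Fin.rev_injective hik)

lemma BVal_cB {d : ℕ} (f : Fin d → Fin d × Bool) (i : Fin d) :
    BVal d (cB d f) i = cZ d (BVal d f i) := by
  have h := (f i).1.isLt
  have hrevZ : (((f i).1.rev : ℕ) : ℤ) = (d:ℤ) - 1 - ((f i).1 : ℤ) := by
    have := Fin.val_rev (f i).1
    omega
  have key : BVal d (cB d f) i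
      = if !(f i).2 then (((f i).1.rev : ℕ) : ℤ) + 1 else -((((f i).1.rev : ℕ) : ℤ) + 1) := rfl
  rw [key, hrevZ]
  unfold BVal cZ
  cases hb : (f i).2 <;> simp [hb] <;> (try split_ifs) <;> omega

lemma sval_cB {d k : ℕ} (f : Fin d → Fin d × Bool) (h : k < d) :
    sval d (cB d f) k = cZ d (sval d f k) := by
  rw [sval_of_lt _ h, sval_of_lt _ h, BVal_cB]

lemma Hfun_cZ (d : ℕ) (x y : ℤ) (hx : x ≠ 0 ∧ -(d:ℤ) ≤ x ∧ x ≤ d)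
    (hy : y ≠ 0 ∧ -(d:ℤ) ≤ y ∧ y ≤ d) : Hfun (cZ d x) (cZ d y) = Hfun x y := by
  obtain ⟨hx1, hx2, hx3⟩ := hx
  obtain ⟨hy1, hy2, hy3⟩ := hy
  unfold Hfun cZ
  split_ifs <;> omega

lemma Hfun_zero (d : ℕ) (y : ℤ) (hy2 : -(d:ℤ) ≤ y) (hy : y < 0) :
    Hfun 0 (cZ d y) = Hfun 0 y - 1 := by
  unfold Hfun cZ
  split_ifs <;> omega

lemma EzS_cB {n : ℕ} (f : Fin (n+1) → Fin (n+1) × Bool) (h0 : sval (n+1) f 0 < 0) :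
    EzS (n+1) (cB (n+1) f) = EzS (n+1) f - 1 := by
  rw [EzS_eq_sum _ (by omega), EzS_eq_sum _ (by omega)]
  rw [Finset.sum_range_succ' _ n, Finset.sum_range_succ' _ n]
  have main : ∀ i ∈ Finset.range n,
      Hfun (if i+1 = 0 then (0:ℤ) else sval (n+1) (cB (n+1) f) (i+1-1))
        (sval (n+1) (cB (n+1) f) (i+1))
      = Hfun (if i+1 = 0 then (0:ℤ) else sval (n+1) f (i+1-1)) (sval (n+1) f (i+1)) := by
    intro i hi
    have hi' : i < n := Finset.mem_range.mp hi
    simp only [Nat.succ_ne_zero, if_neg, Nat.add_sub_cancel]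
    rw [sval_cB f (show i < n+1 by omega), sval_cB f (show i+1 < n+1 by omega)]
    exact Hfun_cZ _ _ _ (sval_props f (by omega)) (sval_props f (by omega))
  rw [Finset.sum_congr rfl main]
  have h00 : Hfun (if (0:ℕ) = 0 then (0:ℤ) else sval (n+1) (cB (n+1) f) (0-1))
      (sval (n+1) (cB (n+1) f) 0)
      = Hfun (if (0:ℕ) = 0 then (0:ℤ) else sval (n+1) f (0-1)) (sval (n+1) f 0) - 1 := by
    simp only [if_pos rfl]
    rw [sval_cB f (show 0 < n+1 by omega)]
    exact Hfun_zero _ _ (sval_props f (by omega)).2.1 h0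
  rw [h00]
  ring

lemma mem_BplusSet {n : ℕ} {j : ℤ} {f : Fin (n+1) → Fin (n+1) × Bool} :
    f ∈ BplusSet (n+1) j ↔
      IsSignedPerm (n+1) f ∧ sval (n+1) f 0 = j ∧ 0 < sval (n+1) f n := by
  simp [BplusSet, Finset.mem_filter]

lemma mem_BminusSet {n : ℕ} {j : ℤ} {f : Fin (n+1) → Fin (n+1) × Bool} :
    f ∈ BminusSet (n+1) j ↔
      IsSignedPerm (n+1) f ∧ sval (n+1) f 0 = j ∧ sval (n+1) f n < 0 := by
  simp [BminusSet, Finset.mem_filter]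

lemma desB_cB_of_last_pos {n : ℕ} (f : Fin (n+1) → Fin (n+1) × Bool)
    (h0 : sval (n+1) f 0 < 0) (hl : 0 < sval (n+1) f n) :
    desB (n+1) (cB (n+1) f) = desB (n+1) f := by
  have h1 := EzS_cB f h0
  have hlast : sval (n+1) (cB (n+1) f) n = cZ (n+1) (sval (n+1) f n) :=
    sval_cB f (by omega)
  obtain ⟨hb1, hb2, hb3⟩ := sval_props f (show n < n+1 by omega)
  unfold EzS at h1
  simp only [Nat.add_sub_cancel] at h1
  rw [hlast] at h1
  unfold cZ at h1
  split_ifs at h1 <;> omega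

lemma desB_cB_of_last_neg {n : ℕ} (f : Fin (n+1) → Fin (n+1) × Bool)
    (h0 : sval (n+1) f 0 < 0) (hl : sval (n+1) f n < 0) :
    desB (n+1) f = desB (n+1) (cB (n+1) f) + 1 := by
  have h1 := EzS_cB f h0
  have hlast : sval (n+1) (cB (n+1) f) n = cZ (n+1) (sval (n+1) f n) :=
    sval_cB f (by omega)
  obtain ⟨hb1, hb2, hb3⟩ := sval_props f (show n < n+1 by omega)
  unfold EzS at h1
  simp only [Nat.add_sub_cancel] at h1
  rw [hlast] at h1
  unfold cZ at h1
  split_ifs at h1 <;> omega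

open Polynomial

lemma cB_mem_minus {n : ℕ} {m : ℤ} (hm1 : 1 ≤ m) (hm2 : m ≤ (n:ℤ)+1)
    {f : Fin (n+1) → Fin (n+1) × Bool} (hf : f ∈ BplusSet (n+1) (-m)) :
    cB (n+1) f ∈ BminusSet (n+1) ((n:ℤ)+2-m) := by
  obtain ⟨h1, h2, h3⟩ := mem_BplusSet.mp hf
  obtain ⟨hb1, hb2, hb3⟩ := sval_props f (show n < n+1 by omega)
  refine mem_BminusSet.mpr ⟨isSignedPerm_cB h1, ?_, ?_⟩
  · rw [sval_cB f (by omega), h2]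
    unfold cZ
    split_ifs <;> push_cast <;> omega
  · rw [sval_cB f (by omega)]
    unfold cZ
    split_ifs <;> omega

lemma cB_mem_plus {n : ℕ} {m : ℤ} (hm1 : 1 ≤ m) (hm2 : m ≤ (n:ℤ)+1)
    {f : Fin (n+1) → Fin (n+1) × Bool} (hf : f ∈ BminusSet (n+1) (-m)) :
    cB (n+1) f ∈ BplusSet (n+1) ((n:ℤ)+2-m) := by
  obtain ⟨h1, h2, h3⟩ := mem_BminusSet.mp hf
  obtain ⟨hb1, hb2, hb3⟩ := sval_props f (show n < n+1 by omega)
  refine mem_BplusSet.mpr ⟨isSignedPerm_cB h1, ?_, ?_⟩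
  · rw [sval_cB f (by omega), h2]
    unfold cZ
    split_ifs <;> push_cast <;> omega
  · rw [sval_cB f (by omega)]
    unfold cZ
    split_ifs <;> omega

lemma cB_mem_plus' {n : ℕ} {m : ℤ} (hm1 : 1 ≤ m) (hm2 : m ≤ (n:ℤ)+1)
    {g : Fin (n+1) → Fin (n+1) × Bool} (hg : g ∈ BminusSet (n+1) ((n:ℤ)+2-m)) :
    cB (n+1) g ∈ BplusSet (n+1) (-m) := by
  obtain ⟨h1, h2, h3⟩ := mem_BminusSet.mp hg
  obtain ⟨hb1, hb2, hb3⟩ := sval_props g (show n < n+1 by omega)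
  refine mem_BplusSet.mpr ⟨isSignedPerm_cB h1, ?_, ?_⟩
  · rw [sval_cB g (by omega), h2]
    unfold cZ
    split_ifs <;> push_cast <;> omega
  · rw [sval_cB g (by omega)]
    unfold cZ
    split_ifs <;> omega

lemma cB_mem_minus' {n : ℕ} {m : ℤ} (hm1 : 1 ≤ m) (hm2 : m ≤ (n:ℤ)+1)
    {g : Fin (n+1) → Fin (n+1) × Bool} (hg : g ∈ BplusSet (n+1) ((n:ℤ)+2-m)) :
    cB (n+1) g ∈ BminusSet (n+1) (-m) := by
  obtain ⟨h1, h2, h3⟩ := mem_BplusSet.mp hg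
  obtain ⟨hb1, hb2, hb3⟩ := sval_props g (show n < n+1 by omega)
  refine mem_BminusSet.mpr ⟨isSignedPerm_cB h1, ?_, ?_⟩
  · rw [sval_cB g (by omega), h2]
    unfold cZ
    split_ifs <;> push_cast <;> omega
  · rw [sval_cB g (by omega)]
    unfold cZ
    split_ifs <;> omega

lemma sumPlus_neg (n : ℕ) (m : ℤ) (hm1 : 1 ≤ m) (hm2 : m ≤ (n:ℤ)+1) :
    ∑ f ∈ BplusSet (n+1) (-m), (X : Polynomial ℝ) ^ (2 * desB (n+1) f)
    = X * ∑ f ∈ BminusSet (n+1) ((n:ℤ)+2-m), X ^ (2 * desB (n+1) f - 1) := by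
  rw [Finset.mul_sum]
  refine Finset.sum_bij' (fun f _ => cB (n+1) f) (fun g _ => cB (n+1) g)
    (fun f hf => cB_mem_minus hm1 hm2 hf) (fun g hg => cB_mem_plus' hm1 hm2 hg)
    (fun f _ => cB_cB f) (fun g _ => cB_cB g) ?_
  intro f hf
  obtain ⟨h1, h2, h3⟩ := mem_BplusSet.mp hf
  have hdes : desB (n+1) (cB (n+1) f) = desB (n+1) f :=
    desB_cB_of_last_pos f (by omega) h3
  have hpos : 1 ≤ desB (n+1) f := desB_pos_of_first_neg f (by omega) (by omega)
  rw [hdes, ← pow_succ']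
  congr 1
  omega

lemma sumMinus_neg (n : ℕ) (m : ℤ) (hm1 : 1 ≤ m) (hm2 : m ≤ (n:ℤ)+1) :
    ∑ f ∈ BminusSet (n+1) (-m), (X : Polynomial ℝ) ^ (2 * desB (n+1) f - 1)
    = X * ∑ f ∈ BplusSet (n+1) ((n:ℤ)+2-m), X ^ (2 * desB (n+1) f) := by
  rw [Finset.mul_sum]
  refine Finset.sum_bij' (fun f _ => cB (n+1) f) (fun g _ => cB (n+1) g)
    (fun f hf => cB_mem_plus hm1 hm2 hf) (fun g hg => cB_mem_minus' hm1 hm2 hg)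
    (fun f _ => cB_cB f) (fun g _ => cB_cB g) ?_
  intro f hf
  obtain ⟨h1, h2, h3⟩ := mem_BminusSet.mp hf
  have hdes : desB (n+1) f = desB (n+1) (cB (n+1) f) + 1 :=
    desB_cB_of_last_neg f (by omega) h3
  have hpos : 1 ≤ desB (n+1) f := desB_pos_of_first_neg f (by omega) (by omega)
  rw [← pow_succ']
  congr 1
  omega

/-! ### Deletion of the first letter -/

def rl (p a : ℕ) : ℕ := if a < p then a else a - 1
def su (p a : ℕ) : ℕ := if a < p then a else a + 1

lemma rl_lt {n p a : ℕ} (hp : p < n+2) (ha : a < n+2) : rl p a < n+1 := by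
  unfold rl; split <;> omega

lemma su_lt {n p a : ℕ} (ha : a < n+1) : su p a < n+2 := by
  unfold su; split <;> omega

def delB (n : ℕ) (p : Fin (n+2)) (f : Fin (n+2) → Fin (n+2) × Bool) :
    Fin (n+1) → Fin (n+1) × Bool :=
  fun k => (⟨rl (p:ℕ) (((f k.succ).1 : ℕ)), rl_lt p.isLt (f k.succ).1.isLt⟩, (f k.succ).2)

def insB (n : ℕ) (p : Fin (n+2)) (g : Fin (n+1) → Fin (n+1) × Bool) :
    Fin (n+2) → Fin (n+2) × Bool :=
  fun i => Fin.cases (p, true)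
    (fun k => (⟨su (p:ℕ) (((g k).1 : ℕ)), su_lt (g k).1.isLt⟩, (g k).2)) i

lemma insB_zero {n : ℕ} (p : Fin (n+2)) (g : Fin (n+1) → Fin (n+1) × Bool) :
    insB n p g 0 = (p, true) := rfl

lemma insB_succ {n : ℕ} (p : Fin (n+2)) (g : Fin (n+1) → Fin (n+1) × Bool) (k : Fin (n+1)) :
    insB n p g k.succ = (⟨su (p:ℕ) (((g k).1 : ℕ)), su_lt (g k).1.isLt⟩, (g k).2) := by
  unfold insB
  rw [Fin.cases_succ]

lemma delB_fst_val {n : ℕ} (p : Fin (n+2)) (f : Fin (n+2) → Fin (n+2) × Bool)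
    (k : Fin (n+1)) : ((delB n p f k).1 : ℕ) = rl (p:ℕ) ((f k.succ).1 : ℕ) := rfl

lemma delB_snd {n : ℕ} (p : Fin (n+2)) (f : Fin (n+2) → Fin (n+2) × Bool)
    (k : Fin (n+1)) : (delB n p f k).2 = (f k.succ).2 := rfl

lemma insB_succ_fst_val {n : ℕ} (p : Fin (n+2)) (g : Fin (n+1) → Fin (n+1) × Bool)
    (k : Fin (n+1)) : ((insB n p g k.succ).1 : ℕ) = su (p:ℕ) ((g k).1 : ℕ) := by
  rw [insB_succ]

lemma insB_succ_snd {n : ℕ} (p : Fin (n+2)) (g : Fin (n+1) → Fin (n+1) × Bool)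
    (k : Fin (n+1)) : (insB n p g k.succ).2 = (g k).2 := by
  rw [insB_succ]

lemma delB_insB {n : ℕ} (p : Fin (n+2)) (g : Fin (n+1) → Fin (n+1) × Bool) :
    delB n p (insB n p g) = g := by
  funext k
  refine Prod.ext (Fin.ext ?_) ?_
  · rw [delB_fst_val, insB_succ_fst_val]
    unfold rl su; split_ifs <;> omega
  · rw [delB_snd, insB_succ_snd]

lemma fst_ne_p {n : ℕ} {p : Fin (n+2)} {f : Fin (n+2) → Fin (n+2) × Bool}
    (hf : IsSignedPerm (n+2) f) (h0 : (f 0).1 = p) (k : Fin (n+1)) :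
    (((f k.succ).1 : ℕ)) ≠ (p : ℕ) := by
  intro h
  have : (f k.succ).1 = (f 0).1 := by rw [h0]; exact Fin.ext h
  have := hf this
  exact (Fin.succ_ne_zero k) this

lemma insB_delB {n : ℕ} {p : Fin (n+2)} {f : Fin (n+2) → Fin (n+2) × Bool}
    (hf : IsSignedPerm (n+2) f) (h0 : f 0 = (p, true)) :
    insB n p (delB n p f) = f := by
  have h0' : (f 0).1 = p := by rw [h0]
  funext i
  induction i using Fin.cases with
  | zero => rw [insB_zero, h0]
  | succ k =>
    rw [insB_succ]
    unfold delB
    have hne := fst_ne_p hf h0' k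
    refine Prod.ext ?_ rfl
    apply Fin.ext
    show su (p:ℕ) (rl (p:ℕ) ((f k.succ).1 : ℕ)) = ((f k.succ).1 : ℕ)
    unfold rl su; split_ifs <;> omega

lemma isSignedPerm_delB {n : ℕ} {p : Fin (n+2)} {f : Fin (n+2) → Fin (n+2) × Bool}
    (hf : IsSignedPerm (n+2) f) (h0 : (f 0).1 = p) :
    IsSignedPerm (n+1) (delB n p f) := by
  intro k k' h
  have h' : rl (p:ℕ) ((f k.succ).1 : ℕ) = rl (p:ℕ) ((f k'.succ).1 : ℕ) := congrArg Fin.val h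
  have hk := fst_ne_p hf h0 k
  have hk' := fst_ne_p hf h0 k'
  have : ((f k.succ).1 : ℕ) = ((f k'.succ).1 : ℕ) := by
    unfold rl at h'; split_ifs at h' <;> omega
  have : (f k.succ).1 = (f k'.succ).1 := Fin.ext this
  have := hf this
  exact Fin.succ_injective _ this

lemma isSignedPerm_insB {n : ℕ} {p : Fin (n+2)} {g : Fin (n+1) → Fin (n+1) × Bool}
    (hg : IsSignedPerm (n+1) g) : IsSignedPerm (n+2) (insB n p g) := by
  intro i i' h
  simp only at h
  induction i using Fin.cases with
  | zero =>
    induction i' using Fin.cases with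
    | zero => rfl
    | succ k' =>
      rw [insB_zero, insB_succ] at h
      have : (p:ℕ) = su (p:ℕ) ((g k').1 : ℕ) := congrArg Fin.val h
      unfold su at this; split_ifs at this <;> omega
  | succ k =>
    induction i' using Fin.cases with
    | zero =>
      rw [insB_zero, insB_succ] at h
      have : su (p:ℕ) ((g k).1 : ℕ) = (p:ℕ) := congrArg Fin.val h
      unfold su at this; split_ifs at this <;> omega
    | succ k' =>
      rw [insB_succ, insB_succ] at h
      have h1 : su (p:ℕ) ((g k).1 : ℕ) = su (p:ℕ) ((g k').1 : ℕ) := congrArg Fin.val h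
      have h2 : ((g k).1 : ℕ) = ((g k').1 : ℕ) := by
        unfold su at h1; split_ifs at h1 <;> omega
      have := hg (Fin.ext h2 : (g k).1 = (g k').1)
      rw [this]

lemma sval_insB_zero {n : ℕ} (p : Fin (n+2)) (g : Fin (n+1) → Fin (n+1) × Bool) :
    sval (n+2) (insB n p g) 0 = (p : ℤ) + 1 := by
  rw [sval_of_lt _ (show 0 < n+2 by omega)]
  show BVal (n+2) (insB n p g) 0 = (p:ℤ) + 1
  unfold BVal
  rw [insB_zero]
  rfl

lemma sval_f_zero {n : ℕ} {p : Fin (n+2)} {f : Fin (n+2) → Fin (n+2) × Bool}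
    (h0 : f 0 = (p, true)) : sval (n+2) f 0 = (p : ℤ) + 1 := by
  rw [sval_of_lt _ (show 0 < n+2 by omega)]
  show BVal (n+2) f 0 = (p:ℤ) + 1
  unfold BVal
  rw [h0]
  rfl

lemma f_zero_of_sval {n : ℕ} {p : Fin (n+2)} {f : Fin (n+2) → Fin (n+2) × Bool}
    (h : sval (n+2) f 0 = (p : ℤ) + 1) : f 0 = (p, true) := by
  rw [sval_of_lt _ (show 0 < n+2 by omega)] at h
  have h2 : BVal (n+2) f 0 = (p:ℤ)+1 := h
  unfold BVal at h2
  have hlt := (f (0 : Fin (n+2))).1.isLt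
  split_ifs at h2 with hb
  · have : ((f 0).1 : ℕ) = (p:ℕ) := by omega
    have h3 : (f 0).1 = p := Fin.ext this
    refine Prod.ext h3 hb
  · omega

lemma sval_delB_eq {n : ℕ} (p : Fin (n+2)) (f : Fin (n+2) → Fin (n+2) × Bool)
    {k : ℕ} (hk : k < n+1) :
    sval (n+1) (delB n p f) k
      = (if (f ⟨k+1, by omega⟩).2 then ((rl (p:ℕ) ((f ⟨k+1, by omega⟩).1 : ℕ)) : ℤ) + 1
        else -(((rl (p:ℕ) ((f ⟨k+1, by omega⟩).1 : ℕ)) : ℤ) + 1)) := by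
  rw [sval_of_lt _ hk]
  exact rfl

lemma sval_big_eq {n : ℕ} (f : Fin (n+2) → Fin (n+2) × Bool) {k : ℕ} (hk : k+1 < n+2) :
    sval (n+2) f (k+1)
      = (if (f ⟨k+1, hk⟩).2 then ((f ⟨k+1, hk⟩).1 : ℤ) + 1
        else -(((f ⟨k+1, hk⟩).1 : ℤ) + 1)) := by
  rw [sval_of_lt _ hk]
  rfl

lemma sval_delB_lt_iff {n : ℕ} {p : Fin (n+2)} {f : Fin (n+2) → Fin (n+2) × Bool}
    (hf : IsSignedPerm (n+2) f) (h0 : (f 0).1 = p) {k k' : ℕ}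
    (hk : k < n+1) (hk' : k' < n+1) :
    (sval (n+1) (delB n p f) k < sval (n+1) (delB n p f) k'
      ↔ sval (n+2) f (k+1) < sval (n+2) f (k'+1)) := by
  rw [sval_delB_eq p f hk, sval_delB_eq p f hk',
    sval_big_eq f (show k+1 < n+2 by omega), sval_big_eq f (show k'+1 < n+2 by omega)]
  have h1 : ((f ⟨k+1, by omega⟩ : Fin (n+2) × Bool).1 : ℕ) ≠ (p:ℕ) := by
    have := fst_ne_p hf h0 ⟨k, hk⟩
    simpa using this
  have h2 : ((f ⟨k'+1, by omega⟩ : Fin (n+2) × Bool).1 : ℕ) ≠ (p:ℕ) := by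
    have := fst_ne_p hf h0 ⟨k', hk'⟩
    simpa using this
  have hb1 := (f (⟨k+1, by omega⟩ : Fin (n+2))).1.isLt
  have hb2 := (f (⟨k'+1, by omega⟩ : Fin (n+2))).1.isLt
  unfold rl
  split_ifs <;> omega

lemma sval_delB_neg_iff {n : ℕ} {p : Fin (n+2)} (f : Fin (n+2) → Fin (n+2) × Bool)
    {k : ℕ} (hk : k < n+1) :
    (sval (n+1) (delB n p f) k < 0 ↔ sval (n+2) f (k+1) < 0) := by
  rw [sval_delB_eq p f hk, sval_big_eq f (show k+1 < n+2 by omega)]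
  split_ifs <;> omega

lemma sval_delB_pos_iff {n : ℕ} {p : Fin (n+2)} (f : Fin (n+2) → Fin (n+2) × Bool)
    {k : ℕ} (hk : k < n+1) :
    (0 < sval (n+1) (delB n p f) k ↔ 0 < sval (n+2) f (k+1)) := by
  rw [sval_delB_eq p f hk, sval_big_eq f (show k+1 < n+2 by omega)]
  split_ifs <;> omega

lemma sval_delB_ltp_iff {n : ℕ} {p : Fin (n+2)} {f : Fin (n+2) → Fin (n+2) × Bool}
    (hf : IsSignedPerm (n+2) f) (h0 : (f 0).1 = p) {k : ℕ} (hk : k < n+1) :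
    (sval (n+1) (delB n p f) k < (p:ℤ)+1 ↔ sval (n+2) f (k+1) < (p:ℤ)+1) := by
  rw [sval_delB_eq p f hk, sval_big_eq f (show k+1 < n+2 by omega)]
  have h1 : ((f ⟨k+1, by omega⟩ : Fin (n+2) × Bool).1 : ℕ) ≠ (p:ℕ) := by
    have := fst_ne_p hf h0 ⟨k, hk⟩
    simpa using this
  have hb1 := (f (⟨k+1, by omega⟩ : Fin (n+2))).1.isLt
  unfold rl
  split_ifs <;> omega

lemma desB_delB {n : ℕ} {p : Fin (n+2)} {f : Fin (n+2) → Fin (n+2) × Bool}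
    (hf : IsSignedPerm (n+2) f) (h0 : f 0 = (p, true)) :
    (desB (n+2) f : ℤ) = (desB (n+1) (delB n p f) : ℤ)
      + (if 0 < sval (n+1) (delB n p f) 0 ∧ sval (n+1) (delB n p f) 0 < (p:ℤ)+1
          then 1 else 0) := by
  have h0' : (f 0).1 = p := by rw [h0]
  have hL := desB_eq_sum (n+2) f
  have hR := desB_eq_sum (n+1) (delB n p f)
  rw [Finset.sum_range_succ' _ (n+1)] at hL
  rw [Finset.sum_range_succ' _ n] at hL
  rw [Finset.sum_range_succ' _ n] at hR
  have hterm : ∀ k ∈ Finset.range n,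
      (if sval (n+2) f (k+1+1) < (if k+1+1 = 0 then (0:ℤ) else sval (n+2) f (k+1+1-1))
        then (1:ℤ) else 0)
      = (if sval (n+1) (delB n p f) (k+1) <
            (if k+1 = 0 then (0:ℤ) else sval (n+1) (delB n p f) (k+1-1))
        then (1:ℤ) else 0) := by
    intro k hk
    have hk' : k < n := Finset.mem_range.mp hk
    rw [if_neg (by omega : ¬(k+1+1 = 0)), if_neg (by omega : ¬(k+1 = 0))]
    simp only [Nat.add_sub_cancel]
    have hiff := sval_delB_lt_iff hf h0' (show k+1 < n+1 by omega) (show k < n+1 by omega)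
    exact if_congr (Iff.symm hiff) rfl rfl
  rw [Finset.sum_congr rfl hterm] at hL
  norm_num at hL hR
  have hf0 : sval (n+2) f 0 = (p:ℤ) + 1 := sval_f_zero h0
  have fact1 : (sval (n+1) (delB n p f) 0 < 0 ↔ sval (n+2) f (0+1) < 0) :=
    sval_delB_neg_iff f (by omega)
  have fact2 : (0 < sval (n+1) (delB n p f) 0 ↔ 0 < sval (n+2) f (0+1)) :=
    sval_delB_pos_iff f (by omega)
  have fact3 : (sval (n+1) (delB n p f) 0 < (p:ℤ)+1 ↔ sval (n+2) f (0+1) < (p:ℤ)+1) :=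
    sval_delB_ltp_iff hf h0' (by omega)
  norm_num at fact1 fact2 fact3
  obtain ⟨hA1, hA2, hA3⟩ := sval_props f (show 1 < n+2 by omega)
  have hedge : ((if sval (n+2) f 1 < sval (n+2) f 0 then (1:ℤ) else 0)
        + (if sval (n+2) f 0 < 0 then (1:ℤ) else 0))
      = ((if sval (n+1) (delB n p f) 0 < 0 then (1:ℤ) else 0)
        + (if 0 < sval (n+1) (delB n p f) 0 ∧ sval (n+1) (delB n p f) 0 < (p:ℤ)+1
            then (1:ℤ) else 0)) := by
    split_ifs <;> omega
  linarith [hL, hR, hedge]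

lemma last_pos_delB {n : ℕ} (p : Fin (n+2)) (f : Fin (n+2) → Fin (n+2) × Bool) :
    0 < sval (n+1) (delB n p f) n ↔ 0 < sval (n+2) f (n+1) :=
  sval_delB_pos_iff f (by omega)

lemma last_neg_delB {n : ℕ} (p : Fin (n+2)) (f : Fin (n+2) → Fin (n+2) × Bool) :
    sval (n+1) (delB n p f) n < 0 ↔ sval (n+2) f (n+1) < 0 :=
  sval_delB_neg_iff f (by omega)

/-- natural-number version of the descent bookkeeping. -/
lemma desB_delB' {n : ℕ} {p : Fin (n+2)} {f : Fin (n+2) → Fin (n+2) × Bool}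
    (hf : IsSignedPerm (n+2) f) (h0 : f 0 = (p, true)) :
    desB (n+2) f = desB (n+1) (delB n p f)
      + (if 0 < sval (n+1) (delB n p f) 0 ∧ sval (n+1) (delB n p f) 0 < (p:ℤ)+1
          then 1 else 0) := by
  have h := desB_delB hf h0
  by_cases hc : 0 < sval (n+1) (delB n p f) 0 ∧ sval (n+1) (delB n p f) 0 < (p:ℤ)+1
  · rw [if_pos hc] at h; rw [if_pos hc]; omega
  · rw [if_neg hc] at h; rw [if_neg hc]; omega

open Polynomial

lemma delPlus (n : ℕ) (p : Fin (n+2)) :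
    ∑ f ∈ BplusSet (n+2) ((p:ℤ)+1), (X : Polynomial ℝ) ^ (2 * desB (n+2) f)
    = ∑ g ∈ Finset.univ.filter (fun g : Fin (n+1) → Fin (n+1) × Bool =>
        IsSignedPerm (n+1) g ∧ 0 < sval (n+1) g n),
      X ^ (2 * desB (n+1) g
        + 2 * (if 0 < sval (n+1) g 0 ∧ sval (n+1) g 0 < (p:ℤ)+1 then 1 else 0)) := by
  refine Finset.sum_bij' (fun f _ => delB n p f) (fun g _ => insB n p g) ?_ ?_ ?_ ?_ ?_
  · intro f hfm
    obtain ⟨h1, h2, h3⟩ := mem_BplusSet.mp hfm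
    have h0 : f 0 = (p, true) := f_zero_of_sval h2
    simp only [Finset.mem_filter, Finset.mem_univ, true_and]
    exact ⟨isSignedPerm_delB h1 (by rw [h0]), (last_pos_delB p f).mpr h3⟩
  · intro g hgm
    simp only [Finset.mem_filter, Finset.mem_univ, true_and] at hgm
    obtain ⟨h1, h2⟩ := hgm
    refine mem_BplusSet.mpr ⟨isSignedPerm_insB h1, sval_insB_zero p g, ?_⟩
    have h3 := last_pos_delB p (insB n p g)
    rw [delB_insB] at h3
    exact h3.mp h2
  · intro f hfm
    obtain ⟨h1, h2, h3⟩ := mem_BplusSet.mp hfm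
    exact insB_delB h1 (f_zero_of_sval h2)
  · intro g _
    exact delB_insB p g
  · intro f hfm
    obtain ⟨h1, h2, h3⟩ := mem_BplusSet.mp hfm
    have h0 : f 0 = (p, true) := f_zero_of_sval h2
    have hd := desB_delB' h1 h0
    rw [hd]
    congr 1
    omega

lemma delMinus (n : ℕ) (p : Fin (n+2)) :
    ∑ f ∈ BminusSet (n+2) ((p:ℤ)+1), (X : Polynomial ℝ) ^ (2 * desB (n+2) f - 1)
    = ∑ g ∈ Finset.univ.filter (fun g : Fin (n+1) → Fin (n+1) × Bool =>
        IsSignedPerm (n+1) g ∧ sval (n+1) g n < 0),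
      X ^ ((2 * desB (n+1) g - 1)
        + 2 * (if 0 < sval (n+1) g 0 ∧ sval (n+1) g 0 < (p:ℤ)+1 then 1 else 0)) := by
  refine Finset.sum_bij' (fun f _ => delB n p f) (fun g _ => insB n p g) ?_ ?_ ?_ ?_ ?_
  · intro f hfm
    obtain ⟨h1, h2, h3⟩ := mem_BminusSet.mp hfm
    have h0 : f 0 = (p, true) := f_zero_of_sval h2
    simp only [Finset.mem_filter, Finset.mem_univ, true_and]
    exact ⟨isSignedPerm_delB h1 (by rw [h0]), (last_neg_delB p f).mpr h3⟩
  · intro g hgm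
    simp only [Finset.mem_filter, Finset.mem_univ, true_and] at hgm
    obtain ⟨h1, h2⟩ := hgm
    refine mem_BminusSet.mpr ⟨isSignedPerm_insB h1, sval_insB_zero p g, ?_⟩
    have h3 := last_neg_delB p (insB n p g)
    rw [delB_insB] at h3
    exact h3.mp h2
  · intro f hfm
    obtain ⟨h1, h2, h3⟩ := mem_BminusSet.mp hfm
    exact insB_delB h1 (f_zero_of_sval h2)
  · intro g _
    exact delB_insB p g
  · intro f hfm
    obtain ⟨h1, h2, h3⟩ := mem_BminusSet.mp hfm
    have h0 : f 0 = (p, true) := f_zero_of_sval h2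
    have hd := desB_delB' h1 h0
    have hpos : 1 ≤ desB (n+1) (delB n p f) := by
      refine desB_pos (delB n p f) (by omega) ?_
      have : (n+1) - 1 = n := by omega
      rw [this]
      exact (last_neg_delB p f).mpr h3
    rw [hd]
    congr 1
    omega

lemma fiberPlus (n : ℕ) (j : ℤ) :
    ∑ g ∈ Finset.univ.filter (fun g : Fin (n+1) → Fin (n+1) × Bool =>
        IsSignedPerm (n+1) g ∧ 0 < sval (n+1) g n),
      (X : Polynomial ℝ) ^ (2 * desB (n+1) g
        + 2 * (if 0 < sval (n+1) g 0 ∧ sval (n+1) g 0 < j then 1 else 0))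
    = ∑ m ∈ Finset.Icc (-(n:ℤ)-1) ((n:ℤ)+1),
        X ^ (2 * (if 0 < m ∧ m < j then 1 else 0))
          * ∑ f ∈ BplusSet (n+1) m, X ^ (2 * desB (n+1) f) := by
  rw [← Finset.sum_fiberwise_of_maps_to (g := fun g => sval (n+1) g 0)
    (t := Finset.Icc (-(n:ℤ)-1) ((n:ℤ)+1)) ?_ _]
  · refine Finset.sum_congr rfl fun m _ => ?_
    rw [Finset.mul_sum]
    have hset : (Finset.univ.filter (fun g : Fin (n+1) → Fin (n+1) × Bool =>
          IsSignedPerm (n+1) g ∧ 0 < sval (n+1) g n)).filter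
          (fun g => sval (n+1) g 0 = m)
        = BplusSet (n+1) m := by
      ext g
      simp only [Finset.mem_filter, Finset.mem_univ, true_and, BplusSet,
        Nat.add_sub_cancel]
      tauto
    rw [hset]
    refine Finset.sum_congr rfl fun g hg => ?_
    have hg0 : sval (n+1) g 0 = m := (mem_BplusSet.mp hg).2.1
    rw [hg0, pow_add, mul_comm]
  · intro g _
    obtain ⟨ha, hb, hc⟩ := sval_props g (show 0 < n+1 by omega)
    simp only [Finset.mem_Icc]
    omega

lemma fiberMinus (n : ℕ) (j : ℤ) :
    ∑ g ∈ Finset.univ.filter (fun g : Fin (n+1) → Fin (n+1) × Bool =>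
        IsSignedPerm (n+1) g ∧ sval (n+1) g n < 0),
      (X : Polynomial ℝ) ^ ((2 * desB (n+1) g - 1)
        + 2 * (if 0 < sval (n+1) g 0 ∧ sval (n+1) g 0 < j then 1 else 0))
    = ∑ m ∈ Finset.Icc (-(n:ℤ)-1) ((n:ℤ)+1),
        X ^ (2 * (if 0 < m ∧ m < j then 1 else 0))
          * ∑ f ∈ BminusSet (n+1) m, X ^ (2 * desB (n+1) f - 1) := by
  rw [← Finset.sum_fiberwise_of_maps_to (g := fun g => sval (n+1) g 0)
    (t := Finset.Icc (-(n:ℤ)-1) ((n:ℤ)+1)) ?_ _]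
  · refine Finset.sum_congr rfl fun m _ => ?_
    rw [Finset.mul_sum]
    have hset : (Finset.univ.filter (fun g : Fin (n+1) → Fin (n+1) × Bool =>
          IsSignedPerm (n+1) g ∧ sval (n+1) g n < 0)).filter
          (fun g => sval (n+1) g 0 = m)
        = BminusSet (n+1) m := by
      ext g
      simp only [Finset.mem_filter, Finset.mem_univ, true_and, BminusSet,
        Nat.add_sub_cancel]
      tauto
    rw [hset]
    refine Finset.sum_congr rfl fun g hg => ?_
    have hg0 : sval (n+1) g 0 = m := (mem_BminusSet.mp hg).2.1
    rw [hg0, pow_add, mul_comm]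
  · intro g _
    obtain ⟨ha, hb, hc⟩ := sval_props g (show 0 < n+1 by omega)
    simp only [Finset.mem_Icc]
    omega

/-! ### Type A deletion -/

lemma svalA_of_lt {d k : ℕ} (σ : Equiv.Perm (Fin d)) (h : k < d) :
    svalA d σ k = (σ ⟨k, h⟩ : ℕ) + 1 := dif_pos h

lemma desA_eq_sum (m : ℕ) (σ : Equiv.Perm (Fin (m+1))) :
    desA (m+1) σ = ∑ i ∈ Finset.range m,
      (if svalA (m+1) σ (i+1) < svalA (m+1) σ i then 1 else 0) := by
  unfold desA
  rw [Finset.card_filter]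
  simp only [Nat.add_sub_cancel]

def insAfun (n : ℕ) (p : Fin (n+2)) (e : Equiv.Perm (Fin (n+1))) : Fin (n+2) → Fin (n+2) :=
  fun i => Fin.cases p (fun k => ⟨su (p:ℕ) ((e k : Fin (n+1)) : ℕ), su_lt (e k).isLt⟩) i

lemma insAfun_zero (n : ℕ) (p : Fin (n+2)) (e : Equiv.Perm (Fin (n+1))) :
    insAfun n p e 0 = p := rfl

lemma insAfun_succ (n : ℕ) (p : Fin (n+2)) (e : Equiv.Perm (Fin (n+1))) (k : Fin (n+1)) :
    insAfun n p e k.succ = ⟨su (p:ℕ) ((e k : Fin (n+1)) : ℕ), su_lt (e k).isLt⟩ := by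
  unfold insAfun
  rw [Fin.cases_succ]

lemma insAfun_inj (n : ℕ) (p : Fin (n+2)) (e : Equiv.Perm (Fin (n+1))) :
    Function.Injective (insAfun n p e) := by
  intro i i' h
  induction i using Fin.cases with
  | zero =>
    induction i' using Fin.cases with
    | zero => rfl
    | succ k' =>
      rw [insAfun_zero, insAfun_succ] at h
      have : (p:ℕ) = su (p:ℕ) ((e k' : Fin (n+1)) : ℕ) := congrArg Fin.val h
      unfold su at this; split_ifs at this <;> omega
  | succ k =>
    induction i' using Fin.cases with
    | zero =>
      rw [insAfun_zero, insAfun_succ] at h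
      have : su (p:ℕ) ((e k : Fin (n+1)) : ℕ) = (p:ℕ) := congrArg Fin.val h
      unfold su at this; split_ifs at this <;> omega
    | succ k' =>
      rw [insAfun_succ, insAfun_succ] at h
      have h1 : su (p:ℕ) ((e k : Fin (n+1)) : ℕ) = su (p:ℕ) ((e k' : Fin (n+1)) : ℕ) :=
        congrArg Fin.val h
      have h2 : ((e k : Fin (n+1)) : ℕ) = ((e k' : Fin (n+1)) : ℕ) := by
        unfold su at h1; split_ifs at h1 <;> omega
      have := e.injective (Fin.ext h2)
      rw [this]

noncomputable def insA (n : ℕ) (p : Fin (n+2)) (e : Equiv.Perm (Fin (n+1))) :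
    Equiv.Perm (Fin (n+2)) :=
  Equiv.ofBijective _ ((Finite.injective_iff_bijective).mp (insAfun_inj n p e))

lemma insA_apply (n : ℕ) (p : Fin (n+2)) (e : Equiv.Perm (Fin (n+1))) (i : Fin (n+2)) :
    insA n p e i = insAfun n p e i := rfl

def dvalA (n : ℕ) (p : Fin (n+2)) (π : Equiv.Perm (Fin (n+2))) : Fin (n+1) → Fin (n+1) :=
  fun k => ⟨rl (p:ℕ) ((π k.succ : Fin (n+2)) : ℕ), rl_lt p.isLt (π k.succ).isLt⟩

lemma pival_ne {n : ℕ} {p : Fin (n+2)} {π : Equiv.Perm (Fin (n+2))} (h0 : π 0 = p)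
    (k : Fin (n+1)) : ((π k.succ : Fin (n+2)) : ℕ) ≠ (p:ℕ) := by
  intro h
  have : π k.succ = π 0 := by rw [h0]; exact Fin.ext h
  exact Fin.succ_ne_zero k (π.injective this)

lemma dvalA_inj {n : ℕ} {p : Fin (n+2)} {π : Equiv.Perm (Fin (n+2))} (h0 : π 0 = p) :
    Function.Injective (dvalA n p π) := by
  intro k k' h
  have h1 : rl (p:ℕ) ((π k.succ : Fin (n+2)) : ℕ) = rl (p:ℕ) ((π k'.succ : Fin (n+2)) : ℕ) :=
    congrArg Fin.val h
  have h2 := pival_ne h0 k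
  have h3 := pival_ne h0 k'
  have h4 : ((π k.succ : Fin (n+2)) : ℕ) = ((π k'.succ : Fin (n+2)) : ℕ) := by
    unfold rl at h1; split_ifs at h1 <;> omega
  exact Fin.succ_injective _ (π.injective (Fin.ext h4))

noncomputable def delA (n : ℕ) (p : Fin (n+2)) (π : Equiv.Perm (Fin (n+2)))
    (h0 : π 0 = p) : Equiv.Perm (Fin (n+1)) :=
  Equiv.ofBijective _ ((Finite.injective_iff_bijective).mp (dvalA_inj h0))

lemma delA_apply (n : ℕ) (p : Fin (n+2)) (π : Equiv.Perm (Fin (n+2))) (h0 : π 0 = p)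
    (k : Fin (n+1)) : delA n p π h0 k = dvalA n p π k := rfl

lemma delA_insA (n : ℕ) (p : Fin (n+2)) (e : Equiv.Perm (Fin (n+1)))
    (h0 : insA n p e 0 = p) : delA n p (insA n p e) h0 = e := by
  apply Equiv.ext
  intro k
  apply Fin.ext
  have h1 : (delA n p (insA n p e) h0 k : ℕ)
      = rl (p:ℕ) ((insA n p e k.succ : Fin (n+2)) : ℕ) := rfl
  rw [h1, insA_apply, insAfun_succ]
  show rl (p:ℕ) (su (p:ℕ) ((e k : Fin (n+1)) : ℕ)) = _
  unfold rl su; split_ifs <;> omega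

lemma insA_delA {n : ℕ} {p : Fin (n+2)} {π : Equiv.Perm (Fin (n+2))} (h0 : π 0 = p) :
    insA n p (delA n p π h0) = π := by
  apply Equiv.ext
  intro i
  induction i using Fin.cases with
  | zero => rw [insA_apply, insAfun_zero, h0]
  | succ k =>
    rw [insA_apply, insAfun_succ]
    apply Fin.ext
    show su (p:ℕ) ((delA n p π h0 k : Fin (n+1)) : ℕ) = ((π k.succ : Fin (n+2)) : ℕ)
    have h1 : ((delA n p π h0 k : Fin (n+1)) : ℕ)
        = rl (p:ℕ) ((π k.succ : Fin (n+2)) : ℕ) := rfl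
    rw [h1]
    have h2 := pival_ne h0 k
    unfold rl su; split_ifs <;> omega

lemma desA_del {n : ℕ} {p : Fin (n+2)} {π : Equiv.Perm (Fin (n+2))} (h0 : π 0 = p)
    (e : Equiv.Perm (Fin (n+1)))
    (he : ∀ k : Fin (n+1), (e k : ℕ) = rl (p:ℕ) ((π k.succ : Fin (n+2)) : ℕ)) :
    desA (n+2) π = desA (n+1) e + (if svalA (n+1) e 0 < (p:ℕ)+1 then 1 else 0) := by
  have hL := desA_eq_sum (n+1) π
  rw [Finset.sum_range_succ' _ n] at hL
  have hterm : ∀ k ∈ Finset.range n,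
      (if svalA (n+2) π (k+1+1) < svalA (n+2) π (k+1) then 1 else 0)
      = (if svalA (n+1) e (k+1) < svalA (n+1) e k then (1:ℕ) else 0) := by
    intro k hk
    have hk' : k < n := Finset.mem_range.mp hk
    have b1 : k+1+1 < n+2 := by omega
    have b2 : k+1 < n+2 := by omega
    have b3 : k+1 < n+1 := by omega
    have b4 : k < n+1 := by omega
    rw [svalA_of_lt π b1, svalA_of_lt π b2, svalA_of_lt e b3, svalA_of_lt e b4]
    have e1 : (e ⟨k+1, b3⟩ : ℕ) = rl (p:ℕ) ((π ⟨k+1+1, b1⟩ : Fin (n+2)) : ℕ) := he ⟨k+1, b3⟩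
    have e2 : (e ⟨k, b4⟩ : ℕ) = rl (p:ℕ) ((π ⟨k+1, b2⟩ : Fin (n+2)) : ℕ) := he ⟨k, b4⟩
    have hb1 : ((π ⟨k+1+1, b1⟩ : Fin (n+2)) : ℕ) ≠ (p:ℕ) := pival_ne h0 ⟨k+1, b3⟩
    have hb2 : ((π ⟨k+1, b2⟩ : Fin (n+2)) : ℕ) ≠ (p:ℕ) := pival_ne h0 ⟨k, b4⟩
    have hq1 := (π (⟨k+1+1, b1⟩ : Fin (n+2))).isLt
    have hq2 := (π (⟨k+1, b2⟩ : Fin (n+2))).isLt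
    rw [e1, e2]
    unfold rl
    split_ifs <;> omega
  rw [Finset.sum_congr rfl hterm] at hL
  rw [hL, desA_eq_sum n e]
  have hedge : (if svalA (n+2) π (0+1) < svalA (n+2) π 0 then 1 else 0)
      = (if svalA (n+1) e 0 < (p:ℕ)+1 then (1:ℕ) else 0) := by
    have b1 : 0+1 < n+2 := by omega
    have b2 : (0:ℕ) < n+2 := by omega
    have b4 : (0:ℕ) < n+1 := by omega
    rw [svalA_of_lt π b1, svalA_of_lt π b2, svalA_of_lt e b4]
    have e2 : (e ⟨0, b4⟩ : ℕ) = rl (p:ℕ) ((π ⟨0+1, b1⟩ : Fin (n+2)) : ℕ) := he ⟨0, b4⟩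
    have hb2 : ((π ⟨0+1, b1⟩ : Fin (n+2)) : ℕ) ≠ (p:ℕ) := pival_ne h0 ⟨0, b4⟩
    have hq2 := (π (⟨0+1, b1⟩ : Fin (n+2))).isLt
    have hp : (π (⟨0, b2⟩ : Fin (n+2)) : ℕ) = (p : ℕ) := by
      rw [show (⟨0, b2⟩ : Fin (n+2)) = 0 from rfl, h0]
    rw [e2, hp]
    unfold rl; split_ifs <;> omega
  rw [hedge]

lemma pi0_eq {n j : ℕ} (hj1 : 1 ≤ j) (hj2 : j ≤ n+2) {π : Equiv.Perm (Fin (n+2))}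
    (h : svalA (n+2) π 0 = j) : π 0 = ⟨j-1, by omega⟩ := by
  rw [svalA_of_lt π (show 0 < n+2 by omega)] at h
  have h' : (π 0 : ℕ) + 1 = j := h
  exact Fin.ext (show (π 0 : ℕ) = j - 1 by omega)

lemma delA_sum (n j : ℕ) (hj1 : 1 ≤ j) (hj2 : j ≤ n+2) :
    APoly (n+2) j = ∑ e : Equiv.Perm (Fin (n+1)),
      (X : Polynomial ℝ) ^ (desA (n+1) e + if svalA (n+1) e 0 < j then 1 else 0) := by
  have hple : j - 1 < n+2 := by omega
  set p : Fin (n+2) := ⟨j-1, hple⟩ with hp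
  have hpj : (p:ℕ) + 1 = j := by
    have : (p:ℕ) = j - 1 := rfl
    omega
  unfold APoly
  refine Finset.sum_bij'
    (fun π hπ => delA n p π (pi0_eq hj1 hj2 (by simpa using hπ)))
    (fun e _ => insA n p e) ?_ ?_ ?_ ?_ ?_
  · intro a _; exact Finset.mem_univ _
  · intro e _
    simp only [Finset.mem_filter, Finset.mem_univ, true_and]
    rw [svalA_of_lt _ (show 0 < n+2 by omega)]
    have h1 : (insA n p e ⟨0, show 0 < n+2 by omega⟩ : ℕ) = (p:ℕ) := rfl
    omega
  · intro π hπ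
    exact insA_delA _
  · intro e he
    exact delA_insA n p e _
  · intro π hπ
    have h0 : π 0 = p := pi0_eq hj1 hj2 (by simpa using hπ)
    have hd := desA_del h0 (delA n p π h0) (fun k => rfl)
    rw [hpj] at hd
    rw [hd]

lemma fiberA (n j : ℕ) :
    (∑ e : Equiv.Perm (Fin (n+1)),
      (X : Polynomial ℝ) ^ (desA (n+1) e + if svalA (n+1) e 0 < j then 1 else 0))
    = ∑ m ∈ Finset.Icc 1 (n+1),
        X ^ (if m < j then 1 else 0) * APoly (n+1) m := by
  rw [← Finset.sum_fiberwise_of_maps_to (g := fun e => svalA (n+1) e 0)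
    (t := Finset.Icc 1 (n+1)) ?_ _]
  · refine Finset.sum_congr rfl fun m _ => ?_
    unfold APoly
    rw [Finset.mul_sum]
    refine Finset.sum_congr rfl fun e he => ?_
    have he0 : svalA (n+1) e 0 = m := by
      simp only [Finset.mem_filter] at he
      exact he.2
    rw [he0, pow_add, mul_comm]
  · intro e _
    have hb := (e (⟨0, show 0 < n+1 by omega⟩ : Fin (n+1))).isLt
    rw [Finset.mem_Icc, svalA_of_lt e (show 0 < n+1 by omega)]
    omega

lemma APoly_rec (n j : ℕ) (hj1 : 1 ≤ j) (hj2 : j ≤ n+2) :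
    APoly (n+2) j = ∑ m ∈ Finset.Icc 1 (n+1),
      (X : Polynomial ℝ) ^ (if m < j then 1 else 0) * APoly (n+1) m :=
  (delA_sum n j hj1 hj2).trans (fiberA n j)

/-! ### Assembly -/

noncomputable def UU (d : ℕ) (j : ℤ) : Polynomial ℝ :=
  (∑ f ∈ BplusSet d j, X ^ (2 * desB d f)) + ∑ f ∈ BminusSet d j, X ^ (2 * desB d f - 1)

lemma Bplus_zero {d : ℕ} : BplusSet d 0 = ∅ := by
  unfold BplusSet
  rw [Finset.filter_eq_empty_iff]
  rintro f - ⟨h1, h2, h3⟩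
  rcases Nat.eq_zero_or_pos d with hd | hd
  · subst hd; simp [sval] at h3
  · exact (sval_props f hd).1 h2

lemma Bminus_zero {d : ℕ} : BminusSet d 0 = ∅ := by
  unfold BminusSet
  rw [Finset.filter_eq_empty_iff]
  rintro f - ⟨h1, h2, h3⟩
  rcases Nat.eq_zero_or_pos d with hd | hd
  · subst hd; simp [sval] at h3
  · exact (sval_props f hd).1 h2

lemma UU_zero (d : ℕ) : UU d 0 = 0 := by
  unfold UU
  rw [Bplus_zero, Bminus_zero]
  simp

lemma UU_neg (n : ℕ) (m : ℤ) (hm1 : 1 ≤ m) (hm2 : m ≤ (n:ℤ)+1) :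
    UU (n+1) (-m) = X * UU (n+1) ((n:ℤ)+2-m) := by
  unfold UU
  rw [sumPlus_neg n m hm1 hm2, sumMinus_neg n m hm1 hm2, mul_add]
  ring

lemma sum_Icc_int_eq {M : Type*} [AddCommMonoid M] (a b : ℕ) (F : ℤ → M) (ha : 1 ≤ a) :
    ∑ m ∈ Finset.Icc (a:ℤ) (b:ℤ), F m = ∑ m ∈ Finset.Icc a b, F (m:ℤ) := by
  refine Finset.sum_bij' (fun m _ => m.toNat) (fun m _ => (m:ℤ)) ?_ ?_ ?_ ?_ ?_
  · intro m hm
    simp only [Finset.mem_Icc] at hm ⊢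
    omega
  · intro m hm
    simp only [Finset.mem_Icc] at hm ⊢
    omega
  · intro m hm
    simp only [Finset.mem_Icc] at hm
    omega
  · intro m hm
    simp only [Finset.mem_Icc] at hm
    omega
  · intro m hm
    simp only [Finset.mem_Icc] at hm
    congr 1
    omega

lemma main_step (n : ℕ) (IH : ∀ j : ℕ, 1 ≤ j → j ≤ n+1 →
      (1+X) ^ n * APoly (n+1) j = UU (n+1) (j:ℤ))
    (j : ℕ) (hj1 : 1 ≤ j) (hj2 : j ≤ n+2) :
    (1+X) ^ (n+1) * APoly (n+2) j = UU (n+2) (j:ℤ) := by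
  have hple : j - 1 < n+2 := by omega
  set p : Fin (n+2) := ⟨j-1, hple⟩ with hp
  have hpval : (p:ℕ) = j - 1 := rfl
  have hpj : ((p:ℕ):ℤ) + 1 = (j:ℤ) := by omega
  -- Step 1 : deletion + fibers
  have e1 : UU (n+2) (j:ℤ) = ∑ m ∈ Finset.Icc (-(n:ℤ)-1) ((n:ℤ)+1),
      X ^ (2 * (if 0 < m ∧ m < (j:ℤ) then 1 else 0)) * UU (n+1) m := by
    unfold UU
    rw [← hpj]
    rw [delPlus n p, delMinus n p, fiberPlus n (((p:ℕ):ℤ)+1), fiberMinus n (((p:ℕ):ℤ)+1)]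
    rw [← Finset.sum_add_distrib]
    exact Finset.sum_congr rfl fun m _ => (mul_add _ _ _).symm
  -- Step 2 : split the index set
  have h1 : Finset.Icc (-(n:ℤ)-1) ((n:ℤ)+1)
      = Finset.Icc (-(n:ℤ)-1) 0 ∪ Finset.Icc 1 ((n:ℤ)+1) := by
    ext x
    simp only [Finset.mem_Icc, Finset.mem_union]
    omega
  have hdisj : Disjoint (Finset.Icc (-(n:ℤ)-1) 0) (Finset.Icc (1:ℤ) ((n:ℤ)+1)) := by
    rw [Finset.disjoint_left]
    intro x hx hx'
    simp only [Finset.mem_Icc] at hx hx'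
    omega
  have h2 : Finset.Icc (-(n:ℤ)-1) (0:ℤ) = insert (0:ℤ) (Finset.Icc (-(n:ℤ)-1) (-1)) := by
    ext x
    simp only [Finset.mem_Icc, Finset.mem_insert]
    omega
  have h0nm : (0:ℤ) ∉ Finset.Icc (-(n:ℤ)-1) (-1) := by
    simp only [Finset.mem_Icc]
    omega
  rw [e1, h1, Finset.sum_union hdisj, h2, Finset.sum_insert h0nm]
  rw [UU_zero, mul_zero, zero_add]
  -- Step 3 : negative part via the symmetry
  have eneg : ∑ m ∈ Finset.Icc (-(n:ℤ)-1) (-1),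
      X ^ (2 * (if 0 < m ∧ m < (j:ℤ) then 1 else 0)) * UU (n+1) m
      = ∑ m ∈ Finset.Icc (1:ℤ) ((n:ℤ)+1), X * UU (n+1) m := by
    refine Finset.sum_bij' (fun m _ => (n:ℤ)+2+m) (fun m _ => m - ((n:ℤ)+2)) ?_ ?_ ?_ ?_ ?_
    · intro m hm
      simp only [Finset.mem_Icc] at hm ⊢
      omega
    · intro m hm
      simp only [Finset.mem_Icc] at hm ⊢
      omega
    · intro m _; ring
    · intro m _; ring
    · intro m hm
      simp only [Finset.mem_Icc] at hm
      have hc : ¬(0 < m ∧ m < (j:ℤ)) := by omega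
      rw [if_neg hc]
      have h := UU_neg n (-m) (by omega) (by omega)
      rw [neg_neg, show (n:ℤ)+2 - -m = (n:ℤ)+2+m from by ring] at h
      rw [h]
      norm_num
  rw [eneg]
  rw [← Finset.sum_add_distrib]
  -- Step 4 : switch to natural indices and use the induction hypothesis
  have e4 : ∑ m ∈ Finset.Icc (1:ℤ) ((n:ℤ)+1),
      (X * UU (n+1) m + X ^ (2 * (if 0 < m ∧ m < (j:ℤ) then 1 else 0)) * UU (n+1) m)
      = ∑ m ∈ Finset.Icc 1 (n+1),
        (X * UU (n+1) (m:ℤ)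
          + X ^ (2 * (if 0 < (m:ℤ) ∧ (m:ℤ) < (j:ℤ) then 1 else 0)) * UU (n+1) (m:ℤ)) := by
    have := sum_Icc_int_eq (M := Polynomial ℝ) 1 (n+1)
      (fun m => X * UU (n+1) m
        + X ^ (2 * (if 0 < m ∧ m < (j:ℤ) then 1 else 0)) * UU (n+1) m) le_rfl
    simpa using this
  rw [e4]
  have e5 : ∀ m ∈ Finset.Icc 1 (n+1),
      X * UU (n+1) (m:ℤ)
        + X ^ (2 * (if 0 < (m:ℤ) ∧ (m:ℤ) < (j:ℤ) then 1 else 0)) * UU (n+1) (m:ℤ)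
      = (1+X) * (X ^ (if m < j then 1 else 0) * ((1+X) ^ n * APoly (n+1) m)) := by
    intro m hm
    simp only [Finset.mem_Icc] at hm
    rw [← IH m (by omega) (by omega)]
    by_cases hc : m < j
    · rw [if_pos (show 0 < (m:ℤ) ∧ (m:ℤ) < (j:ℤ) by omega), if_pos hc]
      ring
    · rw [if_neg (show ¬(0 < (m:ℤ) ∧ (m:ℤ) < (j:ℤ)) by omega), if_neg hc]
      ring
  rw [Finset.sum_congr rfl e5]
  rw [← Finset.mul_sum]
  rw [APoly_rec n j hj1 hj2]
  rw [Finset.mul_sum, Finset.mul_sum]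
  refine Finset.sum_congr rfl fun m _ => ?_
  ring

lemma main_base (j : ℕ) (hj1 : 1 ≤ j) (hj2 : j ≤ 1) :
    (1+X) ^ 0 * APoly 1 j = UU 1 (j:ℤ) := by
  have hj : j = 1 := by omega
  subst hj
  rw [pow_zero, one_mul]
  have hA : APoly 1 1 = 1 := by
    unfold APoly
    have hfil : Finset.univ.filter (fun σ : Equiv.Perm (Fin 1) => svalA 1 σ 0 = 1)
        = Finset.univ := by
      refine Finset.filter_true_of_mem fun σ _ => ?_
      rw [svalA_of_lt σ one_pos]
      have : σ ⟨0, one_pos⟩ = ⟨0, one_pos⟩ := Subsingleton.elim _ _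
      rw [this]
    rw [hfil]
    have hdes : ∀ σ : Equiv.Perm (Fin 1), desA 1 σ = 0 := by
      intro σ
      unfold desA
      simp
    rw [Finset.sum_congr rfl fun σ _ => by rw [hdes σ, pow_zero]]
    rw [Finset.sum_const, Finset.card_univ]
    simp
  rw [hA]
  have h1 : BplusSet 1 1 = {fun _ => ((0 : Fin 1), true)} := by decide
  have h2 : BminusSet 1 1 = ∅ := by decide
  have h3 : desB 1 (fun _ => ((0 : Fin 1), true)) = 0 := by decide
  unfold UU
  rw [Nat.cast_one, h1, h2, Finset.sum_singleton, Finset.sum_empty, h3]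
  simp

lemma main_all (n : ℕ) : ∀ j : ℕ, 1 ≤ j → j ≤ n+1 →
    (1+X) ^ n * APoly (n+1) j = UU (n+1) (j:ℤ) := by
  induction n with
  | zero => exact main_base
  | succ n IH => exact main_step n IH

end SJW

/-- for `d ≥ 1` and `1 ≤ j ≤ d`, the polynomial identity
`(1+t)^{d−1} A_{d,j}(t) = B^+_{d,j}(t²) + (1/t) B^−_{d,j}(t²)` holds (the right-hand
side is a polynomial since `des_B ≥ 1` on `B^−_{d,j}`). -/
theorem APoly_eq_Tpoly (d j : ℕ) (hd : 1 ≤ d) (hj : 1 ≤ j) (hjd : j ≤ d) :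
    (1 + X) ^ (d - 1) * APoly d j =
      ∑ f ∈ BplusSet d (j : ℤ), X ^ (2 * desB d f)
        + ∑ f ∈ BminusSet d (j : ℤ), X ^ (2 * desB d f - 1) := by
  obtain ⟨n, rfl⟩ : ∃ n, d = n + 1 := ⟨d - 1, by omega⟩
  have h := SJW.main_all n j hj hjd
  simpa [SJW.UU] using h
end

section
/- For d ≥ 1 and 1 ≤ j ≤ d, B^+_{d,j}(t) = E_2((1+t)^{d−1} A_{d,j}(t)), where E_2 is the operator that extracts coefficients of even powers: E_2(Σ c_k t^k) = Σ c_{2k} t^k. -/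
open Polynomial

/-- The coefficient-extraction operator `E_r(∑_k c_k t^k) = ∑_k c_{rk} t^k`. -/
noncomputable def Eop (r : ℕ) (p : Polynomial ℝ) : Polynomial ℝ :=
  ∑ k ∈ Finset.range (p.natDegree + 1), C (p.coeff (r * k)) * X ^ k

open Polynomial Finset

/-! ### Basic value machinery -/

def zval (v : ℕ) (s : Bool) : ℤ := if s then (v:ℤ)+1 else -((v:ℤ)+1)

lemma BVal_eq (d : ℕ) (f : Fin d → Fin d × Bool) (i : Fin d) :
    BVal d f i = zval (f i).1.val (f i).2 := rfl

lemma sval_eq (d : ℕ) (f : Fin d → Fin d × Bool) (k : ℕ) (h : k < d) :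
    sval d f k = zval (f ⟨k,h⟩).1.val (f ⟨k,h⟩).2 := by
  rw [sval, dif_pos h]; rfl

lemma zval_pos_iff (v : ℕ) (s : Bool) : 0 < zval v s ↔ s = true := by
  cases s <;> simp [zval] <;> omega

lemma zval_neg_iff (v : ℕ) (s : Bool) : zval v s < 0 ↔ s = false := by
  cases s <;> simp [zval] <;> omega

/-- standardization of a value, removing value `a` -/
def stdv (a v : ℕ) : ℕ := if v < a then v else v - 1

def unstdv (a w : ℕ) : ℕ := if w < a then w else w + 1

lemma unstdv_stdv {a v : ℕ} (h : v ≠ a) : unstdv a (stdv a v) = v := by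
  unfold unstdv stdv; split_ifs <;> omega

lemma stdv_unstdv (a w : ℕ) : stdv a (unstdv a w) = w := by
  unfold unstdv stdv; split_ifs <;> omega

lemma unstdv_ne (a w : ℕ) : unstdv a w ≠ a := by
  unfold unstdv; split_ifs <;> omega

lemma stdv_lt_iff {a v₁ v₂ : ℕ} (h₁ : v₁ ≠ a) (h₂ : v₂ ≠ a) :
    stdv a v₁ < stdv a v₂ ↔ v₁ < v₂ := by
  unfold stdv; split_ifs <;> omega

lemma stdv_lt {a v m : ℕ} (ha : a < m + 1) (hv : v < m + 1) (hm : 0 < m) : stdv a v < m := by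
  unfold stdv; split_ifs <;> omega

lemma unstdv_lt {a w m : ℕ} (hw : w < m) : unstdv a w < m + 1 := by
  unfold unstdv; split_ifs <;> omega

lemma zval_stdv_lt_iff {a v₁ v₂ : ℕ} (s₁ s₂ : Bool) (h₁ : v₁ ≠ a) (h₂ : v₂ ≠ a) :
    zval (stdv a v₁) s₁ < zval (stdv a v₂) s₂ ↔ zval v₁ s₁ < zval v₂ s₂ := by
  have := stdv_lt_iff h₁ h₂
  have := stdv_lt_iff h₂ h₁
  cases s₁ <;> cases s₂ <;> simp [zval] <;> omega

/-! ### tail and cons -/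

def tailF (m : ℕ) (f : Fin (m+1) → Fin (m+1) × Bool) : Fin m → Fin m × Bool :=
  fun i => (⟨stdv (f 0).1.val (f i.succ).1.val,
      stdv_lt (f 0).1.isLt (f i.succ).1.isLt i.pos⟩, (f i.succ).2)

def consF (m : ℕ) (a : Fin (m+1)) (s : Bool) (f' : Fin m → Fin m × Bool) :
    Fin (m+1) → Fin (m+1) × Bool :=
  fun i => Fin.cases (a, s) (fun i' => (⟨unstdv a.val (f' i').1.val, unstdv_lt (f' i').1.isLt⟩,
    (f' i').2)) i

lemma consF_zero (m : ℕ) (a : Fin (m+1)) (s : Bool) (f' : Fin m → Fin m × Bool) :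
    consF m a s f' 0 = (a, s) := rfl

lemma consF_succ (m : ℕ) (a : Fin (m+1)) (s : Bool) (f' : Fin m → Fin m × Bool) (i : Fin m) :
    consF m a s f' i.succ = (⟨unstdv a.val (f' i).1.val, unstdv_lt (f' i).1.isLt⟩, (f' i).2) := rfl

lemma tailF_consF (m : ℕ) (a : Fin (m+1)) (s : Bool) (f' : Fin m → Fin m × Bool) :
    tailF m (consF m a s f') = f' := by
  funext i
  simp only [tailF, consF_zero, consF_succ]
  ext
  · simp [stdv_unstdv]
  · rfl

lemma consF_tailF (m : ℕ) (f : Fin (m+1) → Fin (m+1) × Bool)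
    (hne : ∀ i : Fin m, (f i.succ).1 ≠ (f 0).1) :
    consF m (f 0).1 (f 0).2 (tailF m f) = f := by
  funext i
  induction i using Fin.cases with
  | zero => rfl
  | succ i' =>
    simp only [consF_succ, tailF]
    have h : (f i'.succ).1.val ≠ (f 0).1.val := fun h => hne i' (Fin.ext h)
    ext
    · simp [unstdv_stdv h]
    · rfl

lemma SP_tailF (m : ℕ) (f : Fin (m+1) → Fin (m+1) × Bool) (hf : IsSignedPerm (m+1) f) :
    IsSignedPerm m (tailF m f) := by
  intro i₁ i₂ h
  simp only [tailF] at h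
  have hne : ∀ i : Fin m, (f i.succ).1.val ≠ (f 0).1.val := by
    intro i he
    exact absurd (hf (Fin.ext he : (fun i => (f i).1) i.succ = (fun i => (f i).1) 0)) (Fin.succ_ne_zero i)
  have h2 : stdv (f 0).1.val (f i₁.succ).1.val = stdv (f 0).1.val (f i₂.succ).1.val :=
    congrArg Fin.val h
  have h3 : (f i₁.succ).1.val = (f i₂.succ).1.val := by
    have := unstdv_stdv (hne i₁); have := unstdv_stdv (hne i₂)
    rw [← unstdv_stdv (hne i₁), ← unstdv_stdv (hne i₂), h2]
  exact Fin.succ_injective m (hf (Fin.ext h3 : (fun i => (f i).1) i₁.succ = (fun i => (f i).1) i₂.succ))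

lemma SP_consF (m : ℕ) (a : Fin (m+1)) (s : Bool) (f' : Fin m → Fin m × Bool)
    (hf : IsSignedPerm m f') : IsSignedPerm (m+1) (consF m a s f') := by
  intro i₁ i₂ h
  simp only at h
  induction i₁ using Fin.cases with
  | zero =>
    induction i₂ using Fin.cases with
    | zero => rfl
    | succ j => exact absurd (congrArg Fin.val h).symm (unstdv_ne a.val (f' j).1.val)
  | succ i =>
    induction i₂ using Fin.cases with
    | zero => exact absurd (congrArg Fin.val h) (unstdv_ne a.val (f' i).1.val)
    | succ j =>
      have h2 : unstdv a.val (f' i).1.val = unstdv a.val (f' j).1.val := congrArg Fin.val h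
      have h3 : (f' i).1.val = (f' j).1.val := by
        rw [← stdv_unstdv a.val (f' i).1.val, ← stdv_unstdv a.val (f' j).1.val, h2]
      exact congrArg Fin.succ (hf (Fin.ext h3 : (fun i => (f' i).1) i = (fun i => (f' i).1) j))

lemma tail_sval (m : ℕ) (f : Fin (m+1) → Fin (m+1) × Bool) (i : ℕ) (hi : i < m) :
    sval m (tailF m f) i
      = zval (stdv (f 0).1.val (f (⟨i+1, by omega⟩ : Fin (m+1))).1.val)
          (f (⟨i+1, by omega⟩ : Fin (m+1))).2 := by
  rw [sval_eq m _ i hi]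
  have : (⟨i, hi⟩ : Fin m).succ = (⟨i+1, by omega⟩ : Fin (m+1)) := rfl
  simp [tailF, this]

lemma tail_sval_sign (m : ℕ) (f : Fin (m+1) → Fin (m+1) × Bool) (i : ℕ) (hi : i < m) :
    (0 < sval m (tailF m f) i ↔ 0 < sval (m+1) f (i+1)) ∧
    (sval m (tailF m f) i < 0 ↔ sval (m+1) f (i+1) < 0) := by
  rw [tail_sval m f i hi, sval_eq (m+1) f (i+1) (by omega)]
  constructor
  · rw [zval_pos_iff, zval_pos_iff]
  · rw [zval_neg_iff, zval_neg_iff]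

/-- order-preservation between consecutive tail values -/
lemma tail_sval_lt (m : ℕ) (f : Fin (m+1) → Fin (m+1) × Bool)
    (hne : ∀ i : Fin m, (f i.succ).1 ≠ (f 0).1) (i i' : ℕ) (hi : i < m) (hi' : i' < m) :
    sval m (tailF m f) i < sval m (tailF m f) i' ↔ sval (m+1) f (i+1) < sval (m+1) f (i'+1) := by
  rw [tail_sval m f i hi, tail_sval m f i' hi', sval_eq (m+1) f (i+1) (by omega),
    sval_eq (m+1) f (i'+1) (by omega)]
  exact zval_stdv_lt_iff _ _
    (fun h => hne ⟨i, hi⟩ (Fin.ext h)) (fun h => hne ⟨i', hi'⟩ (Fin.ext h))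

/-- expansion of `desB` as indicator sums -/
lemma desB_expand (d : ℕ) (f : Fin (d+1) → Fin (d+1) × Bool) :
    desB (d+1) f = (if sval (d+1) f 0 < 0 then 1 else 0)
      + ∑ i ∈ Finset.range d, (if sval (d+1) f (i+1) < sval (d+1) f i then 1 else 0) := by
  rw [desB, Finset.card_filter, Finset.sum_range_succ']
  have h0 : (if sval (d+1) f 0 < if (0:ℕ) = 0 then (0:ℤ) else sval (d+1) f (0-1) then 1 else 0)
      = (if sval (d+1) f 0 < 0 then 1 else 0) := by norm_num
  rw [h0, add_comm]
  congr 1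

/-! ### head characterization and descent decomposition -/

lemma head_spec (m : ℕ) (f : Fin (m+1) → Fin (m+1) × Bool) (c : ℤ) (hc : 1 ≤ |c|)
    (h : sval (m+1) f 0 = c) :
    ((f 0).1.val : ℤ) = |c| - 1 ∧ (f 0).2 = decide (0 < c) := by
  rw [sval_eq (m+1) f 0 (by omega)] at h
  have : (⟨0, by omega⟩ : Fin (m+1)) = 0 := rfl
  rw [this] at h
  have hc0 : c ≠ 0 := by intro hh; rw [hh] at hc; simp at hc
  rcases lt_or_gt_of_ne hc0 with hcs | hcs
  · rw [abs_of_neg hcs]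
    rcases Bool.dichotomy (f 0).2 with hb | hb <;> rw [hb] at h <;> simp [zval] at h <;>
      [skip; omega]
    refine ⟨by omega, by rw [hb]; simp; omega⟩
  · rw [abs_of_pos hcs]
    rcases Bool.dichotomy (f 0).2 with hb | hb <;> rw [hb] at h <;> simp [zval] at h <;>
      [omega; skip]
    refine ⟨by omega, by rw [hb]; simp; omega⟩

def dlt (c c' : ℤ) : ℕ :=
  if 0 < c then (if 0 < c' then (if c' < c then 1 else 0) else 0)
  else (if 0 < c' then 1 else (if c' ≤ c then 1 else 0))

lemma dlt_spec (a v : ℕ) (s : Bool) (c : ℤ) (hc : 1 ≤ |c|) (ha : (a:ℤ) = |c| - 1)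
    (hv : v ≠ a) :
    dlt c (zval (stdv a v) s) + (if zval (stdv a v) s < 0 then 1 else 0)
      = (if c < 0 then 1 else 0) + (if zval v s < c then 1 else 0) := by
  have hc0 : c ≠ 0 := by intro h; rw [h] at hc; simp at hc
  rcases lt_or_gt_of_ne hc0 with h | h
  · rw [abs_of_neg h] at ha
    unfold dlt zval stdv
    cases s <;> split_ifs <;> omega
  · rw [abs_of_pos h] at ha
    unfold dlt zval stdv
    cases s <;> split_ifs <;> omega

lemma desB_tail (m : ℕ) (f : Fin (m+2) → Fin (m+2) × Bool)
    (hne : ∀ i : Fin (m+1), (f i.succ).1 ≠ (f 0).1) :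
    desB (m+2) f + (if sval (m+1) (tailF (m+1) f) 0 < 0 then 1 else 0)
      = (if sval (m+2) f 0 < 0 then 1 else 0) + (if sval (m+2) f 1 < sval (m+2) f 0 then 1 else 0)
        + desB (m+1) (tailF (m+1) f) := by
  rw [desB_expand (m+1) f, desB_expand m (tailF (m+1) f)]
  rw [Finset.sum_range_succ' (fun i => if sval (m+2) f (i+1) < sval (m+2) f i then 1 else 0) m]
  have hsum : ∑ i ∈ Finset.range m,
      (if sval (m+1) (tailF (m+1) f) (i+1) < sval (m+1) (tailF (m+1) f) i then 1 else 0)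
      = ∑ i ∈ Finset.range m, (if sval (m+2) f (i+1+1) < sval (m+2) f (i+1) then 1 else 0) := by
    apply Finset.sum_congr rfl
    intro i hi
    have hi' : i < m := Finset.mem_range.mp hi
    rw [if_congr (tail_sval_lt (m+1) f hne (i+1) i (by omega) (by omega)) rfl rfl]
  rw [hsum]
  ring

lemma tail_first (m : ℕ) (f : Fin (m+2) → Fin (m+2) × Bool) :
    sval (m+1) (tailF (m+1) f) 0
      = zval (stdv (f 0).1.val (f (⟨1, by omega⟩ : Fin (m+2))).1.val)
          (f (⟨1, by omega⟩ : Fin (m+2))).2 :=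
  tail_sval (m+1) f 0 (by omega)

lemma desB_decomp (m : ℕ) (f : Fin (m+2) → Fin (m+2) × Bool) (hf : IsSignedPerm (m+2) f)
    (c : ℤ) (hc : 1 ≤ |c|) (hhead : sval (m+2) f 0 = c) :
    desB (m+2) f = dlt c (sval (m+1) (tailF (m+1) f) 0) + desB (m+1) (tailF (m+1) f) := by
  have hne : ∀ i : Fin (m+1), (f i.succ).1 ≠ (f 0).1 := by
    intro i he
    exact absurd (hf (he : (fun i => (f i).1) i.succ = (fun i => (f i).1) 0)) (Fin.succ_ne_zero i)
  obtain ⟨ha, hs⟩ := head_spec (m+1) f c hc hhead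
  have h1 : sval (m+2) f 1 = zval (f (⟨1, by omega⟩ : Fin (m+2))).1.val
      (f (⟨1, by omega⟩ : Fin (m+2))).2 := sval_eq (m+2) f 1 (by omega)
  have hv : (f (⟨1, by omega⟩ : Fin (m+2))).1.val ≠ (f 0).1.val := by
    intro he
    exact hne ⟨0, by omega⟩ (Fin.ext he)
  have hspec := dlt_spec (f 0).1.val (f (⟨1, by omega⟩ : Fin (m+2))).1.val
      (f (⟨1, by omega⟩ : Fin (m+2))).2 c hc ha hv
  rw [← tail_first m f, ← h1] at hspec
  have ht := desB_tail m f hne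
  rw [hhead] at ht
  omega

/-! ### auxiliary zval facts -/

lemma zval_abs (v : ℕ) (s : Bool) : |zval v s| = (v:ℤ)+1 := by
  cases s
  · show |(-((v:ℤ) + 1))| = (v:ℤ)+1
    rw [abs_neg, abs_of_nonneg (by positivity)]
  · show |((v:ℤ) + 1)| = (v:ℤ)+1
    rw [abs_of_nonneg (by positivity)]

lemma zval_head (c : ℤ) (hc : 1 ≤ |c|) : zval (|c|-1).toNat (decide (0 < c)) = c := by
  have hc0 : c ≠ 0 := by intro hh; rw [hh] at hc; simp at hc
  rcases lt_or_gt_of_ne hc0 with h | h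
  · rw [abs_of_neg h]
    have : decide (0 < c) = false := by simp; omega
    rw [this]; simp [zval]; omega
  · rw [abs_of_pos h]
    have : decide (0 < c) = true := by simp; omega
    rw [this]; simp [zval]; omega

/-! ### the master recursion -/

lemma genrec (m : ℕ) (c : ℤ) (hc1 : 1 ≤ |c|) (hc2 : |c| ≤ m+2)
    (Cd : (Fin (m+2) → Fin (m+2) × Bool) → Prop) [DecidablePred Cd]
    (Cm : (Fin (m+1) → Fin (m+1) × Bool) → Prop) [DecidablePred Cm]
    (hcompat : ∀ f, IsSignedPerm (m+2) f → sval (m+2) f 0 = c →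
      (Cd f ↔ Cm (tailF (m+1) f))) :
    ∑ f ∈ Finset.univ.filter (fun f => IsSignedPerm (m+2) f ∧ sval (m+2) f 0 = c ∧ Cd f),
        (X : Polynomial ℝ) ^ desB (m+2) f
    = ∑ k ∈ Finset.Icc 1 (m+1),
        ((X:Polynomial ℝ) ^ dlt c (k:ℤ) *
          ∑ f' ∈ Finset.univ.filter (fun f' => IsSignedPerm (m+1) f' ∧
            sval (m+1) f' 0 = (k:ℤ) ∧ Cm f'), X ^ desB (m+1) f'
        + X ^ dlt c (-(k:ℤ)) *
          ∑ f' ∈ Finset.univ.filter (fun f' => IsSignedPerm (m+1) f' ∧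
            sval (m+1) f' 0 = -(k:ℤ) ∧ Cm f'), X ^ desB (m+1) f') := by
  classical
  -- rewrite the right side as a single sigma-indexed sum
  have per_k : ∀ k ∈ Finset.Icc 1 (m+1),
      ((X:Polynomial ℝ) ^ dlt c (k:ℤ) *
          ∑ f' ∈ Finset.univ.filter (fun f' => IsSignedPerm (m+1) f' ∧
            sval (m+1) f' 0 = (k:ℤ) ∧ Cm f'), X ^ desB (m+1) f'
        + X ^ dlt c (-(k:ℤ)) *
          ∑ f' ∈ Finset.univ.filter (fun f' => IsSignedPerm (m+1) f' ∧
            sval (m+1) f' 0 = -(k:ℤ) ∧ Cm f'), X ^ desB (m+1) f')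
      = ∑ f' ∈ Finset.univ.filter (fun f' => IsSignedPerm (m+1) f' ∧
            |sval (m+1) f' 0| = (k:ℤ) ∧ Cm f'),
          X ^ (dlt c (sval (m+1) f' 0) + desB (m+1) f') := by
    intro k hk
    obtain ⟨hk1, hk2⟩ := Finset.mem_Icc.mp hk
    rw [Finset.mul_sum, Finset.mul_sum]
    have e1 : ∀ f' ∈ Finset.univ.filter (fun f' => IsSignedPerm (m+1) f' ∧
        sval (m+1) f' 0 = (k:ℤ) ∧ Cm f'),
        (X:Polynomial ℝ) ^ dlt c (k:ℤ) * X ^ desB (m+1) f'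
          = X ^ (dlt c (sval (m+1) f' 0) + desB (m+1) f') := by
      intro f' hf'
      obtain ⟨_, h2, _⟩ := (Finset.mem_filter.mp hf').2
      rw [h2, pow_add]
    have e2 : ∀ f' ∈ Finset.univ.filter (fun f' => IsSignedPerm (m+1) f' ∧
        sval (m+1) f' 0 = -(k:ℤ) ∧ Cm f'),
        (X:Polynomial ℝ) ^ dlt c (-(k:ℤ)) * X ^ desB (m+1) f'
          = X ^ (dlt c (sval (m+1) f' 0) + desB (m+1) f') := by
      intro f' hf'
      obtain ⟨_, h2, _⟩ := (Finset.mem_filter.mp hf').2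
      rw [h2, pow_add]
    rw [Finset.sum_congr rfl e1, Finset.sum_congr rfl e2, ← Finset.sum_union]
    · congr 1
      ext f'
      simp only [Finset.mem_union, Finset.mem_filter, Finset.mem_univ, true_and]
      constructor
      · rintro (⟨h1,h2,h3⟩|⟨h1,h2,h3⟩) <;> refine ⟨h1, ?_, h3⟩ <;> rw [h2] <;> simp <;> omega
      · rintro ⟨h1, h2, h3⟩
        rcases (abs_eq (by positivity : (0:ℤ) ≤ (k:ℤ))).mp h2 with h | h
        · exact Or.inl ⟨h1, h, h3⟩
        · exact Or.inr ⟨h1, h, h3⟩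
    · rw [Finset.disjoint_filter]
      rintro f' _ ⟨_, h2, _⟩ ⟨_, h2', _⟩
      rw [h2] at h2'
      omega
  rw [Finset.sum_congr rfl per_k, Finset.sum_sigma']
  -- now a bijection
  have hone : (1:ℕ) < m+2 := by omega
  have ha0 : (|c|-1).toNat < m+2 := by omega
  refine Finset.sum_bij'
    (i := fun f _ => (⟨(stdv (f 0).1.val (f (⟨1, hone⟩ : Fin (m+2))).1.val) + 1,
        tailF (m+1) f⟩ : (_ : ℕ) × (Fin (m+1) → Fin (m+1) × Bool)))
    (j := fun x _ => consF (m+1) ⟨(|c|-1).toNat, ha0⟩ (decide (0 < c)) x.2)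
    ?_ ?_ ?_ ?_ ?_
  · -- forward membership
    intro f hf
    try dsimp only
    obtain ⟨hSP, hhead, hCd⟩ := (Finset.mem_filter.mp hf).2
    have hbound : stdv (f 0).1.val (f (⟨1, hone⟩ : Fin (m+2))).1.val < m+1 :=
      stdv_lt (f 0).1.isLt (f (⟨1, hone⟩ : Fin (m+2))).1.isLt (by omega)
    rw [Finset.mem_sigma]
    constructor
    · show stdv (f 0).1.val (f (⟨1, hone⟩ : Fin (m+2))).1.val + 1 ∈ Finset.Icc 1 (m+1)
      rw [Finset.mem_Icc]
      omega
    show tailF (m+1) f ∈ _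
    rw [Finset.mem_filter]
    refine ⟨Finset.mem_univ _, SP_tailF (m+1) f hSP, ?_, (hcompat f hSP hhead).mp hCd⟩
    rw [tail_first m f, zval_abs]
    push_cast
    ring
  · -- backward membership
    rintro ⟨k, f'⟩ hx
    try dsimp only
    rw [Finset.mem_sigma] at hx
    try dsimp only at hx
    obtain ⟨hk, hf'⟩ := hx
    obtain ⟨hSP', habs, hCm⟩ := (Finset.mem_filter.mp hf').2
    have hSP : IsSignedPerm (m+2) (consF (m+1) ⟨(|c|-1).toNat, ha0⟩ (decide (0 < c)) f') :=
      SP_consF (m+1) _ _ f' hSP'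
    have hhead : sval (m+2) (consF (m+1) ⟨(|c|-1).toNat, ha0⟩ (decide (0 < c)) f') 0 = c := by
      rw [sval_eq _ _ 0 (by omega)]
      have h0 : (⟨0, by omega⟩ : Fin (m+2)) = 0 := rfl
      rw [h0, consF_zero]
      have : ((⟨(|c|-1).toNat, ha0⟩ : Fin (m+2)) : Fin (m+2)).val = (|c|-1).toNat := rfl
      rw [this]
      exact zval_head c hc1
    rw [Finset.mem_filter]
    refine ⟨Finset.mem_univ _, hSP, hhead, ?_⟩
    rw [hcompat _ hSP hhead, tailF_consF]
    exact hCm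
  · -- left inverse
    intro f hf
    try dsimp only
    obtain ⟨hSP, hhead, _⟩ := (Finset.mem_filter.mp hf).2
    obtain ⟨ha, hs⟩ := head_spec (m+1) f c hc1 hhead
    have h1 : (⟨(|c|-1).toNat, ha0⟩ : Fin (m+2)) = (f 0).1 := by
      apply Fin.ext
      show (|c|-1).toNat = (f 0).1.val
      omega
    have hne : ∀ i : Fin (m+1), (f i.succ).1 ≠ (f 0).1 := by
      intro i he
      exact absurd (hSP (he : (fun i => (f i).1) i.succ = (fun i => (f i).1) 0))
        (Fin.succ_ne_zero i)
    calc consF (m+1) ⟨(|c|-1).toNat, ha0⟩ (decide (0 < c)) (tailF (m+1) f)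
        = consF (m+1) (f 0).1 (f 0).2 (tailF (m+1) f) := by
          rw [h1, hs]
      _ = f := consF_tailF (m+1) f hne
  · -- right inverse
    rintro ⟨k, f'⟩ hx
    try dsimp only
    rw [Finset.mem_sigma] at hx
    try dsimp only at hx
    obtain ⟨hk, hf'⟩ := hx
    try dsimp only at hf'
    obtain ⟨hSP', habs, hCm⟩ := (Finset.mem_filter.mp hf').2
    have h2 : tailF (m+1) (consF (m+1) ⟨(|c|-1).toNat, ha0⟩ (decide (0 < c)) f') = f' :=
      tailF_consF (m+1) _ _ f'
    have h1 : stdv ((consF (m+1) ⟨(|c|-1).toNat, ha0⟩ (decide (0 < c)) f') 0).1.val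
        ((consF (m+1) ⟨(|c|-1).toNat, ha0⟩ (decide (0 < c)) f')
          (⟨1, hone⟩ : Fin (m+2))).1.val + 1 = k := by
      have he : (⟨1, hone⟩ : Fin (m+2)) = (0 : Fin (m+1)).succ := rfl
      rw [he, consF_zero, consF_succ]
      simp only [stdv_unstdv]
      rw [sval_eq _ _ 0 (by omega)] at habs
      have h0 : (⟨0, by omega⟩ : Fin (m+1)) = 0 := rfl
      rw [h0, zval_abs] at habs
      omega
    exact Sigma.ext h1 (heq_of_eq (by rw [h2]))
  · -- weights
    intro f hf
    try dsimp only
    obtain ⟨hSP, hhead, _⟩ := (Finset.mem_filter.mp hf).2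
    rw [desB_decomp m f hSP c hc1 hhead]

/-! ### instantiations of the master recursion -/

lemma recBplus (m : ℕ) (c : ℤ) (hc1 : 1 ≤ |c|) (hc2 : |c| ≤ m+2) :
    BplusPoly (m+2) c = ∑ k ∈ Finset.Icc 1 (m+1),
      ((X:Polynomial ℝ) ^ dlt c (k:ℤ) * BplusPoly (m+1) (k:ℤ)
        + X ^ dlt c (-(k:ℤ)) * BplusPoly (m+1) (-(k:ℤ))) := by
  have h := genrec m c hc1 hc2
    (fun f => 0 < sval (m+2) f ((m+2)-1)) (fun f' => 0 < sval (m+1) f' ((m+1)-1))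
    (fun f _ _ => by
      show 0 < sval (m+2) f (m+1) ↔ 0 < sval (m+1) (tailF (m+1) f) m
      exact ((tail_sval_sign (m+1) f m (by omega)).1).symm)
  unfold BplusPoly BplusSet
  exact h

lemma recBminus (m : ℕ) (c : ℤ) (hc1 : 1 ≤ |c|) (hc2 : |c| ≤ m+2) :
    BminusPoly (m+2) c = ∑ k ∈ Finset.Icc 1 (m+1),
      ((X:Polynomial ℝ) ^ dlt c (k:ℤ) * BminusPoly (m+1) (k:ℤ)
        + X ^ dlt c (-(k:ℤ)) * BminusPoly (m+1) (-(k:ℤ))) := by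
  have h := genrec m c hc1 hc2
    (fun f => sval (m+2) f ((m+2)-1) < 0) (fun f' => sval (m+1) f' ((m+1)-1) < 0)
    (fun f _ _ => by
      show sval (m+2) f (m+1) < 0 ↔ sval (m+1) (tailF (m+1) f) m < 0
      exact ((tail_sval_sign (m+1) f m (by omega)).2).symm)
  unfold BminusPoly BminusSet
  exact h

/-! ### the all-positive model for type A -/

noncomputable def AposPoly (d : ℕ) (c : ℤ) : Polynomial ℝ :=
  ∑ f ∈ Finset.univ.filter (fun f : Fin d → Fin d × Bool =>
      IsSignedPerm d f ∧ sval d f 0 = c ∧ ∀ i, (f i).2 = true), X ^ desB d f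

lemma recApos (m : ℕ) (c : ℤ) (hc1 : 1 ≤ c) (hc2 : c ≤ m+2) :
    AposPoly (m+2) c = ∑ k ∈ Finset.Icc 1 (m+1),
      ((X:Polynomial ℝ) ^ dlt c (k:ℤ) * AposPoly (m+1) (k:ℤ)
        + X ^ dlt c (-(k:ℤ)) * AposPoly (m+1) (-(k:ℤ))) := by
  have habs : |c| = c := abs_of_pos (by omega)
  have h := genrec m c (by omega) (by omega)
    (fun f => ∀ i, (f i).2 = true) (fun f' => ∀ i, (f' i).2 = true)
    (fun f hSP hhead => by
      obtain ⟨_, hs⟩ := head_spec (m+1) f c (by omega) hhead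
      have hs' : (f 0).2 = true := by rw [hs]; simp; omega
      constructor
      · intro h i
        exact h i.succ
      · intro h i
        induction i using Fin.cases with
        | zero => exact hs'
        | succ i' => exact h i')
  unfold AposPoly
  exact h

lemma Apos_neg (m : ℕ) (k : ℕ) (hk : 1 ≤ k) : AposPoly (m+1) (-(k:ℤ)) = 0 := by
  unfold AposPoly
  rw [Finset.sum_eq_zero]
  intro f hf
  obtain ⟨_, hhead, hpos⟩ := (Finset.mem_filter.mp hf).2
  rw [sval_eq _ _ 0 (by omega)] at hhead
  exfalso
  have := zval_pos_iff (f ⟨0, by omega⟩).1.val (f ⟨0, by omega⟩).2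
  rw [hhead] at this
  have h2 := (this.mpr (hpos _))
  omega

lemma APoly_eq_Apos (m : ℕ) (j : ℕ) : APoly (m+1) j = AposPoly (m+1) (j:ℤ) := by
  unfold APoly AposPoly
  refine Finset.sum_bij'
    (i := fun σ _ => fun i => (σ i, true))
    (j := fun f hf => Equiv.ofBijective (fun i => (f i).1)
      (Finite.injective_iff_bijective.mp
        ((Finset.mem_filter.mp hf).2.1)))
    ?_ ?_ ?_ ?_ ?_
  · intro σ hσ
    have hj := (Finset.mem_filter.mp hσ).2
    rw [Finset.mem_filter]
    refine ⟨Finset.mem_univ _, fun a b h => σ.injective h, ?_, fun i => rfl⟩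
    rw [sval_eq _ _ 0 (by omega)]
    rw [svalA, dif_pos (by omega : 0 < m+1)] at hj
    show zval (σ ⟨0, by omega⟩).val true = (j:ℤ)
    rw [zval]
    simp only [if_pos]
    omega
  · intro f hf
    obtain ⟨hSP, hhead, hpos⟩ := (Finset.mem_filter.mp hf).2
    rw [Finset.mem_filter]
    refine ⟨Finset.mem_univ _, ?_⟩
    rw [svalA, dif_pos (by omega : 0 < m+1)]
    show ((f ⟨0, by omega⟩).1).val + 1 = j
    rw [sval_eq _ _ 0 (by omega)] at hhead
    rw [hpos ⟨0, by omega⟩] at hhead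
    rw [zval] at hhead
    simp only [if_pos] at hhead
    omega
  · intro σ hσ
    ext i : 1
    rfl
  · intro f hf
    obtain ⟨hSP, hhead, hpos⟩ := (Finset.mem_filter.mp hf).2
    funext i
    exact Prod.ext rfl (hpos i).symm
  · intro σ hσ
    congr 1
    rw [desA, desB_expand m (fun i => (σ i, true)), Finset.card_filter]
    have h0 : sval (m+1) (fun i => (σ i, true)) 0 = zval (σ ⟨0, by omega⟩).val true :=
      sval_eq _ _ 0 (by omega)
    have hh : (if sval (m+1) (fun i => (σ i, true)) 0 < 0 then 1 else 0) = 0 := by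
      rw [h0]
      rw [if_neg]
      rw [zval]
      simp only [if_pos]
      omega
    rw [hh, zero_add]
    apply Finset.sum_congr rfl
    intro i hi
    have hi' : i < m := Finset.mem_range.mp hi
    congr 1
    rw [sval_eq _ _ (i+1) (by omega), sval_eq _ _ i (by omega),
      svalA, dif_pos (show i+1 < m+1 by omega), svalA, dif_pos (show i < m+1 by omega)]
    dsimp only
    rw [eq_iff_iff]
    simp [zval]

/-! ### dlt evaluations -/

lemma dlt_pp (j k : ℕ) (hj : 1 ≤ j) (hk : 1 ≤ k) : dlt (j:ℤ) (k:ℤ) = if k < j then 1 else 0 := by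
  unfold dlt; split_ifs <;> omega

lemma dlt_pn (j k : ℕ) (hj : 1 ≤ j) (hk : 1 ≤ k) : dlt (j:ℤ) (-(k:ℤ)) = 0 := by
  unfold dlt; split_ifs <;> omega

lemma dlt_np (j k : ℕ) (hj : 1 ≤ j) (hk : 1 ≤ k) : dlt (-(j:ℤ)) (k:ℤ) = 1 := by
  unfold dlt; split_ifs <;> omega

lemma dlt_nn (j k : ℕ) (hj : 1 ≤ j) (hk : 1 ≤ k) :
    dlt (-(j:ℤ)) (-(k:ℤ)) = if j ≤ k then 1 else 0 := by
  unfold dlt; split_ifs <;> omega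

/-! ### the A-recursion -/

lemma recA (m j : ℕ) (hj1 : 1 ≤ j) (hj2 : j ≤ m+2) :
    APoly (m+2) j = ∑ k ∈ Finset.Icc 1 (m+1),
      (X:Polynomial ℝ) ^ (if k < j then 1 else 0) * APoly (m+1) k := by
  rw [APoly_eq_Apos (m+1) j, recApos m (j:ℤ) (by omega) (by push_cast; omega)]
  apply Finset.sum_congr rfl
  intro k hk
  obtain ⟨hk1, hk2⟩ := Finset.mem_Icc.mp hk
  rw [dlt_pp j k hj1 hk1, dlt_pn j k hj1 hk1, Apos_neg m k hk1, APoly_eq_Apos m k]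
  ring

/-- `(1+t)^{d-1} A_{d,j}(t)` -/
noncomputable def PP (d j : ℕ) : Polynomial ℝ := (1+X)^(d-1) * APoly d j

lemma PP_rec (m j : ℕ) (hj1 : 1 ≤ j) (hj2 : j ≤ m+2) :
    PP (m+2) j = (1+X) * ∑ k ∈ Finset.Icc 1 (m+1),
      (X:Polynomial ℝ) ^ (if k < j then 1 else 0) * PP (m+1) k := by
  have e1 : (m+2-1 : ℕ) = m+1 := rfl
  have e2 : (m+1-1 : ℕ) = m := rfl
  unfold PP
  rw [e1, e2, recA m j hj1 hj2]
  rw [Finset.mul_sum, Finset.mul_sum]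
  apply Finset.sum_congr rfl
  intro k _
  ring

/-! ### coefficient micro-lemmas -/

lemma cXmul_zero (p : Polynomial ℝ) : ((X:Polynomial ℝ)^(1:ℕ) * p).coeff 0 = 0 := by
  rw [pow_one, Polynomial.mul_coeff_zero, Polynomial.coeff_X_zero, zero_mul]

lemma cXmul_succ (p : Polynomial ℝ) (s : ℕ) :
    ((X:Polynomial ℝ)^(1:ℕ) * p).coeff (s+1) = p.coeff s := by
  rw [pow_one, Polynomial.coeff_X_mul]

lemma cone_mul (p : Polynomial ℝ) : ((X:Polynomial ℝ)^(0:ℕ) * p) = p := by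
  rw [pow_zero, one_mul]

lemma oneX_coeff_zero (q : Polynomial ℝ) : ((1+X) * q).coeff 0 = q.coeff 0 := by
  rw [add_mul, one_mul, Polynomial.coeff_add, Polynomial.mul_coeff_zero,
    Polynomial.coeff_X_zero, zero_mul, add_zero]

lemma oneX_coeff_succ (q : Polynomial ℝ) (n : ℕ) :
    ((1+X) * q).coeff (n+1) = q.coeff (n+1) + q.coeff n := by
  rw [add_mul, one_mul, Polynomial.coeff_add, Polynomial.coeff_X_mul]

/-! ### coefficients of `PP (m+2) j` -/

lemma Qcoeff_zero (m j : ℕ) :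
    (∑ k ∈ Finset.Icc 1 (m+1), (X:Polynomial ℝ) ^ (if k < j then 1 else 0) * PP (m+1) k).coeff 0
      = ∑ k ∈ Finset.Icc 1 (m+1), (if k < j then 0 else (PP (m+1) k).coeff 0) := by
  rw [Polynomial.finset_sum_coeff]
  apply Finset.sum_congr rfl
  intro k _
  split_ifs with h
  · rw [cXmul_zero]
  · rw [cone_mul]

lemma Qcoeff_succ (m j : ℕ) (n : ℕ) :
    (∑ k ∈ Finset.Icc 1 (m+1), (X:Polynomial ℝ) ^ (if k < j then 1 else 0) * PP (m+1) k).coeff (n+1)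
      = ∑ k ∈ Finset.Icc 1 (m+1),
          (if k < j then (PP (m+1) k).coeff n else (PP (m+1) k).coeff (n+1)) := by
  rw [Polynomial.finset_sum_coeff]
  apply Finset.sum_congr rfl
  intro k _
  split_ifs with h
  · rw [cXmul_succ]
  · rw [cone_mul]

lemma PPcoeff_zero (m j : ℕ) (hj1 : 1 ≤ j) (hj2 : j ≤ m+2) :
    (PP (m+2) j).coeff 0 = ∑ k ∈ Finset.Icc 1 (m+1), (if k < j then 0 else (PP (m+1) k).coeff 0) := by
  rw [PP_rec m j hj1 hj2, oneX_coeff_zero, Qcoeff_zero]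

lemma PPcoeff_one (m j : ℕ) (hj1 : 1 ≤ j) (hj2 : j ≤ m+2) :
    (PP (m+2) j).coeff 1 = ∑ k ∈ Finset.Icc 1 (m+1),
      ((if k < j then (PP (m+1) k).coeff 0 else (PP (m+1) k).coeff 1)
        + (if k < j then 0 else (PP (m+1) k).coeff 0)) := by
  rw [PP_rec m j hj1 hj2, oneX_coeff_succ, Qcoeff_succ, Qcoeff_zero, ← Finset.sum_add_distrib]

lemma PPcoeff_two (m j : ℕ) (hj1 : 1 ≤ j) (hj2 : j ≤ m+2) (n : ℕ) :
    (PP (m+2) j).coeff (n+2) = ∑ k ∈ Finset.Icc 1 (m+1),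
      ((if k < j then (PP (m+1) k).coeff (n+1) else (PP (m+1) k).coeff (n+2))
        + (if k < j then (PP (m+1) k).coeff n else (PP (m+1) k).coeff (n+1))) := by
  rw [PP_rec m j hj1 hj2, oneX_coeff_succ, Qcoeff_succ, Qcoeff_succ, ← Finset.sum_add_distrib]

/-! ### reflection of sums -/

lemma sum_reflect (M : ℕ) (F : ℕ → ℝ) :
    ∑ k ∈ Finset.Icc 1 M, F (M+1-k) = ∑ k ∈ Finset.Icc 1 M, F k := by
  refine Finset.sum_bij' (i := fun k _ => M+1-k) (j := fun k _ => M+1-k) ?_ ?_ ?_ ?_ ?_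
  · intro k hk; rw [Finset.mem_Icc] at hk
    show (M+1-k) ∈ Finset.Icc 1 M; rw [Finset.mem_Icc]; omega
  · intro k hk; rw [Finset.mem_Icc] at hk
    show (M+1-k) ∈ Finset.Icc 1 M; rw [Finset.mem_Icc]; omega
  · intro k hk; rw [Finset.mem_Icc] at hk; show M + 1 - (M + 1 - k) = k; omega
  · intro k hk; rw [Finset.mem_Icc] at hk; show M + 1 - (M + 1 - k) = k; omega
  · intro k hk; rfl

/-! ### the four induction claims -/

def ClaimsAt (d j : ℕ) : Prop :=
  (∀ t, (BplusPoly d (j:ℤ)).coeff t = (PP d j).coeff (2*t)) ∧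
  ((BminusPoly d (j:ℤ)).coeff 0 = 0 ∧
    ∀ t, (BminusPoly d (j:ℤ)).coeff (t+1) = (PP d j).coeff (2*t+1)) ∧
  ((BplusPoly d (-(j:ℤ))).coeff 0 = 0 ∧
    ∀ t, (BplusPoly d (-(j:ℤ))).coeff (t+1) = (PP d (d+1-j)).coeff (2*t+1)) ∧
  ((BminusPoly d (-(j:ℤ))).coeff 0 = 0 ∧
    ∀ t, (BminusPoly d (-(j:ℤ))).coeff (t+1) = (PP d (d+1-j)).coeff (2*t))

/-! ### base case -/

lemma APoly_one : APoly 1 1 = 1 := by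
  unfold APoly
  have hfil : Finset.univ.filter (fun σ : Equiv.Perm (Fin 1) => svalA 1 σ 0 = 1)
      = Finset.univ := by
    apply Finset.filter_true_of_mem
    intro σ _
    rw [svalA, dif_pos (by omega : 0 < 1)]
    have : (σ ⟨0, by omega⟩).val = 0 := by omega
    omega
  rw [hfil]
  have hdes : ∀ σ : Equiv.Perm (Fin 1), desA 1 σ = 0 := by
    intro σ
    rw [desA]
    rfl
  rw [Finset.sum_congr rfl (fun σ _ => by rw [hdes σ, pow_zero])]
  rw [Finset.sum_const, Finset.card_univ]
  simp [Fintype.card_perm]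

lemma PP_one : PP 1 1 = 1 := by
  unfold PP
  rw [APoly_one]
  norm_num

lemma claims_one : ClaimsAt 1 1 := by
  have hBp : BplusSet 1 1 = {(fun _ => (0, true) : Fin 1 → Fin 1 × Bool)} := by decide
  have hBm : BminusSet 1 1 = (∅ : Finset (Fin 1 → Fin 1 × Bool)) := by decide
  have hBpn : BplusSet 1 (-1) = (∅ : Finset (Fin 1 → Fin 1 × Bool)) := by decide
  have hBmn : BminusSet 1 (-1) = {(fun _ => (0, false) : Fin 1 → Fin 1 × Bool)} := by decide
  have hdT : desB 1 (fun _ => (0, true) : Fin 1 → Fin 1 × Bool) = 0 := by decide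
  have hdF : desB 1 (fun _ => (0, false) : Fin 1 → Fin 1 × Bool) = 1 := by decide
  have hP1 : BplusPoly 1 1 = 1 := by
    unfold BplusPoly; rw [hBp, Finset.sum_singleton, hdT, pow_zero]
  have hP2 : BminusPoly 1 1 = 0 := by
    unfold BminusPoly; rw [hBm, Finset.sum_empty]
  have hP3 : BplusPoly 1 (-1) = 0 := by
    unfold BplusPoly; rw [hBpn, Finset.sum_empty]
  have hP4 : BminusPoly 1 (-1) = X := by
    unfold BminusPoly; rw [hBmn, Finset.sum_singleton, hdF, pow_one]
  have hco : ∀ n : ℕ, (1 : Polynomial ℝ).coeff n = if n = 0 then 1 else 0 :=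
    fun n => Polynomial.coeff_one
  refine ⟨?_, ⟨?_, ?_⟩, ⟨?_, ?_⟩, ⟨?_, ?_⟩⟩
  · intro t
    show (BplusPoly 1 (1:ℤ)).coeff t = _
    rw [hP1, PP_one, hco, hco]
    split_ifs <;> first | rfl | omega
  · show (BminusPoly 1 (1:ℤ)).coeff 0 = 0
    rw [hP2]; rfl
  · intro t
    show (BminusPoly 1 (1:ℤ)).coeff (t+1) = _
    rw [hP2, PP_one, hco]
    rw [if_neg (by omega)]
    rfl
  · show (BplusPoly 1 (-(1:ℤ))).coeff 0 = 0
    rw [hP3]; rfl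
  · intro t
    show (BplusPoly 1 (-(1:ℤ))).coeff (t+1) = (PP 1 (1+1-1)).coeff (2*t+1)
    rw [hP3]
    show (0:Polynomial ℝ).coeff (t+1) = (PP 1 1).coeff (2*t+1)
    rw [PP_one, hco, if_neg (by omega)]
    rfl
  · show (BminusPoly 1 (-(1:ℤ))).coeff 0 = 0
    rw [hP4, Polynomial.coeff_X_zero]
  · intro t
    show (BminusPoly 1 (-(1:ℤ))).coeff (t+1) = (PP 1 (1+1-1)).coeff (2*t)
    rw [hP4]
    show (X:Polynomial ℝ).coeff (t+1) = (PP 1 1).coeff (2*t)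
    rw [PP_one, hco, Polynomial.coeff_X]
    split_ifs <;> first | rfl | omega

/-! ### induction step -/

lemma claims_step (m : ℕ) (IH : ∀ k, 1 ≤ k → k ≤ m+1 → ClaimsAt (m+1) k)
    (j : ℕ) (hj1 : 1 ≤ j) (hj2 : j ≤ m+2) : ClaimsAt (m+2) j := by
  have habs : |(j:ℤ)| = (j:ℤ) := abs_of_pos (by push_cast; omega)
  have habsn : |(-(j:ℤ))| = (j:ℤ) := by rw [abs_neg]; exact habs
  have hc1 : 1 ≤ |(j:ℤ)| := by rw [habs]; push_cast; omega
  have hc2 : |(j:ℤ)| ≤ m+2 := by rw [habs]; push_cast; omega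
  have hc1n : 1 ≤ |(-(j:ℤ))| := by rw [habsn]; push_cast; omega
  have hc2n : |(-(j:ℤ))| ≤ m+2 := by rw [habsn]; push_cast; omega
  have IH1 : ∀ k, 1 ≤ k → k ≤ m+1 →
      ∀ t, (BplusPoly (m+1) (k:ℤ)).coeff t = (PP (m+1) k).coeff (2*t) :=
    fun k h1 h2 => (IH k h1 h2).1
  have IH2z : ∀ k, 1 ≤ k → k ≤ m+1 → (BminusPoly (m+1) (k:ℤ)).coeff 0 = 0 :=
    fun k h1 h2 => (IH k h1 h2).2.1.1
  have IH2 : ∀ k, 1 ≤ k → k ≤ m+1 →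
      ∀ t, (BminusPoly (m+1) (k:ℤ)).coeff (t+1) = (PP (m+1) k).coeff (2*t+1) :=
    fun k h1 h2 => (IH k h1 h2).2.1.2
  have IH3z : ∀ k, 1 ≤ k → k ≤ m+1 → (BplusPoly (m+1) (-(k:ℤ))).coeff 0 = 0 :=
    fun k h1 h2 => (IH k h1 h2).2.2.1.1
  have IH3 : ∀ k, 1 ≤ k → k ≤ m+1 →
      ∀ t, (BplusPoly (m+1) (-(k:ℤ))).coeff (t+1) = (PP (m+1) (m+1+1-k)).coeff (2*t+1) :=
    fun k h1 h2 => (IH k h1 h2).2.2.1.2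
  have IH4z : ∀ k, 1 ≤ k → k ≤ m+1 → (BminusPoly (m+1) (-(k:ℤ))).coeff 0 = 0 :=
    fun k h1 h2 => (IH k h1 h2).2.2.2.1
  have IH4 : ∀ k, 1 ≤ k → k ≤ m+1 →
      ∀ t, (BminusPoly (m+1) (-(k:ℤ))).coeff (t+1) = (PP (m+1) (m+1+1-k)).coeff (2*t) :=
    fun k h1 h2 => (IH k h1 h2).2.2.2.2
  refine ⟨?_, ⟨?_, ?_⟩, ⟨?_, ?_⟩, ⟨?_, ?_⟩⟩
  -- Claim 1
  · intro t
    rw [recBplus m (j:ℤ) hc1 hc2, Polynomial.finset_sum_coeff]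
    have hterm : ∀ k ∈ Finset.Icc 1 (m+1),
        ((X:Polynomial ℝ)^(dlt (j:ℤ) (k:ℤ)) * BplusPoly (m+1) (k:ℤ)
          + X^(dlt (j:ℤ) (-(k:ℤ))) * BplusPoly (m+1) (-(k:ℤ))).coeff t
        = ((X:Polynomial ℝ)^(if k < j then 1 else 0) * BplusPoly (m+1) (k:ℤ)).coeff t
          + (BplusPoly (m+1) (-(k:ℤ))).coeff t := by
      intro k hk
      obtain ⟨hk1, hk2⟩ := Finset.mem_Icc.mp hk
      rw [Polynomial.coeff_add, dlt_pp j k hj1 hk1, dlt_pn j k hj1 hk1, cone_mul]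
    rw [Finset.sum_congr rfl hterm]
    cases t with
    | zero =>
      rw [PPcoeff_zero m j hj1 hj2]
      apply Finset.sum_congr rfl
      intro k hk
      obtain ⟨hk1, hk2⟩ := Finset.mem_Icc.mp hk
      rw [IH3z k hk1 hk2, add_zero]
      split_ifs with h
      · exact cXmul_zero _
      · rw [cone_mul]
        have h0 := IH1 k hk1 hk2 0
        rw [show 2*0 = 0 from rfl] at h0
        exact h0
    | succ s =>
      have hL : ∀ k ∈ Finset.Icc 1 (m+1),
          ((X:Polynomial ℝ)^(if k < j then 1 else 0) * BplusPoly (m+1) (k:ℤ)).coeff (s+1)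
            + (BplusPoly (m+1) (-(k:ℤ))).coeff (s+1)
          = ((if k < j then (PP (m+1) k).coeff (2*s) else (PP (m+1) k).coeff (2*s+2))
            + (PP (m+1) (m+1+1-k)).coeff (2*s+1)) := by
        intro k hk
        obtain ⟨hk1, hk2⟩ := Finset.mem_Icc.mp hk
        congr 1
        · split_ifs with h
          · rw [cXmul_succ, IH1 k hk1 hk2 s]
          · rw [cone_mul, IH1 k hk1 hk2 (s+1), show 2*(s+1) = 2*s+2 from by ring]
        · exact IH3 k hk1 hk2 s
      rw [Finset.sum_congr rfl hL, Finset.sum_add_distrib]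
      have hrefl : ∑ k ∈ Finset.Icc 1 (m+1), (PP (m+1) (m+1+1-k)).coeff (2*s+1)
          = ∑ k ∈ Finset.Icc 1 (m+1), (PP (m+1) k).coeff (2*s+1) :=
        sum_reflect (m+1) (fun x => (PP (m+1) x).coeff (2*s+1))
      rw [hrefl, ← Finset.sum_add_distrib,
        show 2*(s+1) = 2*s+2 from by ring, PPcoeff_two m j hj1 hj2 (2*s)]
      apply Finset.sum_congr rfl
      intro k hk
      split_ifs with h
      · exact add_comm _ _
      · rfl
  -- Claim 2, coeff 0
  · rw [recBminus m (j:ℤ) hc1 hc2, Polynomial.finset_sum_coeff]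
    apply Finset.sum_eq_zero
    intro k hk
    obtain ⟨hk1, hk2⟩ := Finset.mem_Icc.mp hk
    rw [Polynomial.coeff_add, dlt_pp j k hj1 hk1, dlt_pn j k hj1 hk1, cone_mul,
      IH4z k hk1 hk2, add_zero]
    split_ifs with h
    · exact cXmul_zero _
    · rw [cone_mul]
      exact IH2z k hk1 hk2
  -- Claim 2, coeff (t+1)
  · intro t
    rw [recBminus m (j:ℤ) hc1 hc2, Polynomial.finset_sum_coeff]
    have hterm : ∀ k ∈ Finset.Icc 1 (m+1),
        ((X:Polynomial ℝ)^(dlt (j:ℤ) (k:ℤ)) * BminusPoly (m+1) (k:ℤ)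
          + X^(dlt (j:ℤ) (-(k:ℤ))) * BminusPoly (m+1) (-(k:ℤ))).coeff (t+1)
        = ((X:Polynomial ℝ)^(if k < j then 1 else 0) * BminusPoly (m+1) (k:ℤ)).coeff (t+1)
          + (BminusPoly (m+1) (-(k:ℤ))).coeff (t+1) := by
      intro k hk
      obtain ⟨hk1, hk2⟩ := Finset.mem_Icc.mp hk
      rw [Polynomial.coeff_add, dlt_pp j k hj1 hk1, dlt_pn j k hj1 hk1, cone_mul]
    rw [Finset.sum_congr rfl hterm]
    cases t with
    | zero =>
      have hL : ∀ k ∈ Finset.Icc 1 (m+1),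
          ((X:Polynomial ℝ)^(if k < j then 1 else 0) * BminusPoly (m+1) (k:ℤ)).coeff 1
            + (BminusPoly (m+1) (-(k:ℤ))).coeff 1
          = ((if k < j then 0 else (PP (m+1) k).coeff 1) + (PP (m+1) (m+1+1-k)).coeff 0) := by
        intro k hk
        obtain ⟨hk1, hk2⟩ := Finset.mem_Icc.mp hk
        congr 1
        · split_ifs with h
          · rw [show (1:ℕ) = 0+1 from rfl, cXmul_succ]
            exact IH2z k hk1 hk2
          · rw [cone_mul]
            have h0 := IH2 k hk1 hk2 0
            rw [show 2*0+1 = 1 from rfl] at h0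
            exact h0
        · have h0 := IH4 k hk1 hk2 0
          rw [show 2*0 = 0 from rfl] at h0
          exact h0
      rw [Finset.sum_congr rfl hL, Finset.sum_add_distrib]
      have hrefl : ∑ k ∈ Finset.Icc 1 (m+1), (PP (m+1) (m+1+1-k)).coeff 0
          = ∑ k ∈ Finset.Icc 1 (m+1), (PP (m+1) k).coeff 0 :=
        sum_reflect (m+1) (fun x => (PP (m+1) x).coeff 0)
      rw [hrefl, ← Finset.sum_add_distrib,
        show 2*0+1 = 1 from rfl, PPcoeff_one m j hj1 hj2]
      apply Finset.sum_congr rfl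
      intro k hk
      split_ifs with h
      · exact add_comm _ _
      · rfl
    | succ s =>
      have hL : ∀ k ∈ Finset.Icc 1 (m+1),
          ((X:Polynomial ℝ)^(if k < j then 1 else 0) * BminusPoly (m+1) (k:ℤ)).coeff (s+1+1)
            + (BminusPoly (m+1) (-(k:ℤ))).coeff (s+1+1)
          = ((if k < j then (PP (m+1) k).coeff (2*s+1) else (PP (m+1) k).coeff (2*s+3))
            + (PP (m+1) (m+1+1-k)).coeff (2*s+2)) := by
        intro k hk
        obtain ⟨hk1, hk2⟩ := Finset.mem_Icc.mp hk
        congr 1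
        · split_ifs with h
          · rw [cXmul_succ]
            exact IH2 k hk1 hk2 s
          · rw [cone_mul]
            have h0 := IH2 k hk1 hk2 (s+1)
            rw [show 2*(s+1)+1 = 2*s+3 from by ring] at h0
            exact h0
        · have h0 := IH4 k hk1 hk2 (s+1)
          rw [show 2*(s+1) = 2*s+2 from by ring] at h0
          exact h0
      rw [Finset.sum_congr rfl hL, Finset.sum_add_distrib]
      have hrefl : ∑ k ∈ Finset.Icc 1 (m+1), (PP (m+1) (m+1+1-k)).coeff (2*s+2)
          = ∑ k ∈ Finset.Icc 1 (m+1), (PP (m+1) k).coeff (2*s+2) :=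
        sum_reflect (m+1) (fun x => (PP (m+1) x).coeff (2*s+2))
      rw [hrefl, ← Finset.sum_add_distrib,
        show 2*(s+1)+1 = (2*s+1)+2 from by ring, PPcoeff_two m j hj1 hj2 (2*s+1)]
      apply Finset.sum_congr rfl
      intro k hk
      split_ifs with h
      · exact add_comm _ _
      · rfl
  -- Claim 3, coeff 0
  · rw [recBplus m (-(j:ℤ)) hc1n hc2n, Polynomial.finset_sum_coeff]
    apply Finset.sum_eq_zero
    intro k hk
    obtain ⟨hk1, hk2⟩ := Finset.mem_Icc.mp hk
    rw [Polynomial.coeff_add, dlt_np j k hj1 hk1, dlt_nn j k hj1 hk1, cXmul_zero, zero_add]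
    split_ifs with h
    · exact cXmul_zero _
    · rw [cone_mul]
      exact IH3z k hk1 hk2
  -- Claim 3, coeff (t+1)
  · intro t
    have hj'1 : 1 ≤ m+2+1-j := by omega
    have hj'2 : m+2+1-j ≤ m+2 := by omega
    rw [recBplus m (-(j:ℤ)) hc1n hc2n, Polynomial.finset_sum_coeff]
    cases t with
    | zero =>
      have hL : ∀ k ∈ Finset.Icc 1 (m+1),
          ((X:Polynomial ℝ)^(dlt (-(j:ℤ)) (k:ℤ)) * BplusPoly (m+1) (k:ℤ)
            + X^(dlt (-(j:ℤ)) (-(k:ℤ))) * BplusPoly (m+1) (-(k:ℤ))).coeff (0+1)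
          = ((PP (m+1) k).coeff 0
            + (if m+1+1-k < m+2+1-j then 0 else (PP (m+1) (m+1+1-k)).coeff 1)) := by
        intro k hk
        obtain ⟨hk1, hk2⟩ := Finset.mem_Icc.mp hk
        rw [Polynomial.coeff_add, dlt_np j k hj1 hk1, dlt_nn j k hj1 hk1, cXmul_succ]
        congr 1
        · have h0 := IH1 k hk1 hk2 0
          rw [show 2*0 = 0 from rfl] at h0
          exact h0
        · split_ifs with h h' h'
          · rw [cXmul_succ]
            exact IH3z k hk1 hk2
          · omega
          · omega
          · rw [cone_mul]
            have h0 := IH3 k hk1 hk2 0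
            rw [show 2*0+1 = 1 from rfl] at h0
            exact h0
      rw [Finset.sum_congr rfl hL, Finset.sum_add_distrib]
      have hrefl : ∑ k ∈ Finset.Icc 1 (m+1),
          (if m+1+1-k < m+2+1-j then 0 else (PP (m+1) (m+1+1-k)).coeff 1)
          = ∑ k ∈ Finset.Icc 1 (m+1), (if k < m+2+1-j then 0 else (PP (m+1) k).coeff 1) :=
        sum_reflect (m+1) (fun x => if x < m+2+1-j then 0 else (PP (m+1) x).coeff 1)
      rw [hrefl, ← Finset.sum_add_distrib,
        show 2*0+1 = 1 from rfl, PPcoeff_one m (m+2+1-j) hj'1 hj'2]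
      apply Finset.sum_congr rfl
      intro k hk
      split_ifs with h
      · rfl
      · exact add_comm _ _
    | succ s =>
      have hL : ∀ k ∈ Finset.Icc 1 (m+1),
          ((X:Polynomial ℝ)^(dlt (-(j:ℤ)) (k:ℤ)) * BplusPoly (m+1) (k:ℤ)
            + X^(dlt (-(j:ℤ)) (-(k:ℤ))) * BplusPoly (m+1) (-(k:ℤ))).coeff (s+1+1)
          = ((PP (m+1) k).coeff (2*s+2)
            + (if m+1+1-k < m+2+1-j then (PP (m+1) (m+1+1-k)).coeff (2*s+1)
                else (PP (m+1) (m+1+1-k)).coeff (2*s+3))) := by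
        intro k hk
        obtain ⟨hk1, hk2⟩ := Finset.mem_Icc.mp hk
        rw [Polynomial.coeff_add, dlt_np j k hj1 hk1, dlt_nn j k hj1 hk1, cXmul_succ]
        congr 1
        · have h0 := IH1 k hk1 hk2 (s+1)
          rw [show 2*(s+1) = 2*s+2 from by ring] at h0
          exact h0
        · split_ifs with h h' h'
          · rw [cXmul_succ]
            exact IH3 k hk1 hk2 s
          · omega
          · omega
          · rw [cone_mul]
            have h0 := IH3 k hk1 hk2 (s+1)
            rw [show 2*(s+1)+1 = 2*s+3 from by ring] at h0
            exact h0
      rw [Finset.sum_congr rfl hL, Finset.sum_add_distrib]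
      have hrefl : ∑ k ∈ Finset.Icc 1 (m+1),
          (if m+1+1-k < m+2+1-j then (PP (m+1) (m+1+1-k)).coeff (2*s+1)
            else (PP (m+1) (m+1+1-k)).coeff (2*s+3))
          = ∑ k ∈ Finset.Icc 1 (m+1),
            (if k < m+2+1-j then (PP (m+1) k).coeff (2*s+1) else (PP (m+1) k).coeff (2*s+3)) :=
        sum_reflect (m+1) (fun x => if x < m+2+1-j then (PP (m+1) x).coeff (2*s+1)
          else (PP (m+1) x).coeff (2*s+3))
      rw [hrefl, ← Finset.sum_add_distrib,
        show 2*(s+1)+1 = (2*s+1)+2 from by ring, PPcoeff_two m (m+2+1-j) hj'1 hj'2 (2*s+1)]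
      apply Finset.sum_congr rfl
      intro k hk
      split_ifs with h
      · rfl
      · exact add_comm _ _
  -- Claim 4, coeff 0
  · rw [recBminus m (-(j:ℤ)) hc1n hc2n, Polynomial.finset_sum_coeff]
    apply Finset.sum_eq_zero
    intro k hk
    obtain ⟨hk1, hk2⟩ := Finset.mem_Icc.mp hk
    rw [Polynomial.coeff_add, dlt_np j k hj1 hk1, dlt_nn j k hj1 hk1, cXmul_zero, zero_add]
    split_ifs with h
    · exact cXmul_zero _
    · rw [cone_mul]
      exact IH4z k hk1 hk2
  -- Claim 4, coeff (t+1)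
  · intro t
    have hj'1 : 1 ≤ m+2+1-j := by omega
    have hj'2 : m+2+1-j ≤ m+2 := by omega
    rw [recBminus m (-(j:ℤ)) hc1n hc2n, Polynomial.finset_sum_coeff]
    cases t with
    | zero =>
      have hL : ∀ k ∈ Finset.Icc 1 (m+1),
          ((X:Polynomial ℝ)^(dlt (-(j:ℤ)) (k:ℤ)) * BminusPoly (m+1) (k:ℤ)
            + X^(dlt (-(j:ℤ)) (-(k:ℤ))) * BminusPoly (m+1) (-(k:ℤ))).coeff (0+1)
          = ((0:ℝ)
            + (if m+1+1-k < m+2+1-j then 0 else (PP (m+1) (m+1+1-k)).coeff 0)) := by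
        intro k hk
        obtain ⟨hk1, hk2⟩ := Finset.mem_Icc.mp hk
        rw [Polynomial.coeff_add, dlt_np j k hj1 hk1, dlt_nn j k hj1 hk1, cXmul_succ]
        congr 1
        · exact IH2z k hk1 hk2
        · split_ifs with h h' h'
          · rw [cXmul_succ]
            exact IH4z k hk1 hk2
          · omega
          · omega
          · rw [cone_mul]
            have h0 := IH4 k hk1 hk2 0
            rw [show 2*0 = 0 from rfl] at h0
            exact h0
      rw [Finset.sum_congr rfl hL, Finset.sum_add_distrib]
      have hrefl : ∑ k ∈ Finset.Icc 1 (m+1),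
          (if m+1+1-k < m+2+1-j then 0 else (PP (m+1) (m+1+1-k)).coeff 0)
          = ∑ k ∈ Finset.Icc 1 (m+1), (if k < m+2+1-j then 0 else (PP (m+1) k).coeff 0) :=
        sum_reflect (m+1) (fun x => if x < m+2+1-j then 0 else (PP (m+1) x).coeff 0)
      rw [hrefl, Finset.sum_const_zero, zero_add,
        show 2*0 = 0 from rfl, PPcoeff_zero m (m+2+1-j) hj'1 hj'2]
    | succ s =>
      have hL : ∀ k ∈ Finset.Icc 1 (m+1),
          ((X:Polynomial ℝ)^(dlt (-(j:ℤ)) (k:ℤ)) * BminusPoly (m+1) (k:ℤ)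
            + X^(dlt (-(j:ℤ)) (-(k:ℤ))) * BminusPoly (m+1) (-(k:ℤ))).coeff (s+1+1)
          = ((PP (m+1) k).coeff (2*s+1)
            + (if m+1+1-k < m+2+1-j then (PP (m+1) (m+1+1-k)).coeff (2*s)
                else (PP (m+1) (m+1+1-k)).coeff (2*s+2))) := by
        intro k hk
        obtain ⟨hk1, hk2⟩ := Finset.mem_Icc.mp hk
        rw [Polynomial.coeff_add, dlt_np j k hj1 hk1, dlt_nn j k hj1 hk1, cXmul_succ]
        congr 1
        · exact IH2 k hk1 hk2 s
        · split_ifs with h h' h'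
          · rw [cXmul_succ]
            have h0 := IH4 k hk1 hk2 s
            exact h0
          · omega
          · omega
          · rw [cone_mul]
            have h0 := IH4 k hk1 hk2 (s+1)
            rw [show 2*(s+1) = 2*s+2 from by ring] at h0
            exact h0
      rw [Finset.sum_congr rfl hL, Finset.sum_add_distrib]
      have hrefl : ∑ k ∈ Finset.Icc 1 (m+1),
          (if m+1+1-k < m+2+1-j then (PP (m+1) (m+1+1-k)).coeff (2*s)
            else (PP (m+1) (m+1+1-k)).coeff (2*s+2))
          = ∑ k ∈ Finset.Icc 1 (m+1),
            (if k < m+2+1-j then (PP (m+1) k).coeff (2*s) else (PP (m+1) k).coeff (2*s+2)) :=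
        sum_reflect (m+1) (fun x => if x < m+2+1-j then (PP (m+1) x).coeff (2*s)
          else (PP (m+1) x).coeff (2*s+2))
      rw [hrefl, ← Finset.sum_add_distrib,
        show 2*(s+1) = (2*s)+2 from by ring, PPcoeff_two m (m+2+1-j) hj'1 hj'2 (2*s)]
      apply Finset.sum_congr rfl
      intro k hk
      split_ifs with h
      · rfl
      · exact add_comm _ _

/-! ### the main induction -/

lemma mainInd : ∀ d j : ℕ, 1 ≤ j → j ≤ d → ClaimsAt d j := by
  intro d
  induction d with
  | zero => intro j h1 h2; omega
  | succ n ihn =>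
    cases n with
    | zero =>
      intro j h1 h2
      have hj : j = 1 := by omega
      subst hj
      exact claims_one
    | succ m =>
      intro j h1 h2
      exact claims_step m (fun k hk1 hk2 => ihn k hk1 hk2) j h1 h2

theorem BplusPoly_eq_E2' (d j : ℕ) (hd : 1 ≤ d) (hj : 1 ≤ j) (hjd : j ≤ d) :
    BplusPoly d (j : ℤ) = Eop 2 ((1 + X) ^ (d - 1) * APoly d j) := by
  have hc : ∀ t, (BplusPoly d (j:ℤ)).coeff t = (PP d j).coeff (2*t) := (mainInd d j hj hjd).1
  have hPP : PP d j = (1 + X) ^ (d - 1) * APoly d j := rfl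
  rw [← hPP]
  apply Polynomial.ext
  intro n
  rw [hc n, Eop, Polynomial.finset_sum_coeff]
  have hterm : ∀ k ∈ Finset.range ((PP d j).natDegree + 1),
      (Polynomial.C ((PP d j).coeff (2*k)) * X^k).coeff n
        = if k = n then (PP d j).coeff (2*k) else 0 := by
    intro k _
    rw [Polynomial.coeff_C_mul, Polynomial.coeff_X_pow]
    split_ifs with h1 h2 h2
    · rw [mul_one]
    · omega
    · omega
    · rw [mul_zero]
  rw [Finset.sum_congr rfl hterm, Finset.sum_ite_eq' (Finset.range ((PP d j).natDegree + 1)) n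
    (fun k => (PP d j).coeff (2*k))]
  split_ifs with h
  · rfl
  · rw [Finset.mem_range] at h
    apply Polynomial.coeff_eq_zero_of_natDegree_lt
    omega


/-- for `d ≥ 1` and `1 ≤ j ≤ d`,
`B^+_{d,j}(t) = E_2((1+t)^{d−1} A_{d,j}(t))`. -/
theorem BplusPoly_eq_E2 (d j : ℕ) (hd : 1 ≤ d) (hj : 1 ≤ j) (hjd : j ≤ d) :
    BplusPoly d (j : ℤ) = Eop 2 ((1 + X) ^ (d - 1) * APoly d j) :=
  BplusPoly_eq_E2' d j hd hj hjd
end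

section
/- Let h(t) = Σ_{i=0}^{d} h_i t^i be a polynomial with non-negative real coefficients, h_0 = 1, and reciprocal coefficients h_i = h_{d−i} for all i, and suppose h has only real roots. Then (−1)^{⌊d/2⌋} h(−1) ≥ 0. -/
open Polynomial

private lemma aux_sign (s : Multiset ℝ) :
    0 ≤ (-1 : ℝ) ^ ((s.filter (fun x => x < 0)).card) * s.prod := by
  induction s using Multiset.induction with
  | empty => simp
  | cons a s ih =>
    rw [Multiset.filter_cons, Multiset.prod_cons, Multiset.card_add]
    by_cases h : a < 0
    · rw [if_pos h]
      simp only [Multiset.card_singleton]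
      have he : (-1 : ℝ) ^ (1 + (Multiset.filter (fun x => x < 0) s).card) * (a * s.prod)
          = (-a) * ((-1) ^ ((Multiset.filter (fun x => x < 0) s).card) * s.prod) := by
        rw [pow_add]; ring
      rw [he]
      exact mul_nonneg (by linarith) ih
    · rw [if_neg h]
      simp only [Multiset.card_zero, zero_add]
      have he : (-1 : ℝ) ^ ((Multiset.filter (fun x => x < 0) s).card) * (a * s.prod)
          = a * ((-1) ^ ((Multiset.filter (fun x => x < 0) s).card) * s.prod) := by ring
      rw [he]
      exact mul_nonneg (le_of_not_gt h) ih

private lemma aux_reflect_one (a : ℝ) : reflect 1 (X - C a) = 1 - C a * X := by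
  have h1 : reflect 1 (X : ℝ[X]) = 1 := by simpa using reflect_monomial 1 1 (R := ℝ)
  have h2 : reflect 1 (C a : ℝ[X]) = C a * X := by
    simpa using reflect_C_mul_X_pow 1 0 (c := a) (R := ℝ)
  have h3 : (X - C a : ℝ[X]) = X + C (-1) * C a := by simp; ring
  rw [h3, reflect_add, reflect_C_mul, h1, h2]
  simp; ring

private lemma aux_reflect_pow (a : ℝ) (m : ℕ) :
    reflect m ((X - C a : ℝ[X]) ^ m) = (1 - C a * X) ^ m := by
  induction m with
  | zero => simp
  | succ n ih =>
    rw [pow_succ]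
    have hf : ((X - C a : ℝ[X]) ^ n).natDegree ≤ n := by
      simpa [natDegree_X_sub_C] using natDegree_pow_le (p := (X - C a : ℝ[X])) (n := n)
    have hg : (X - C a : ℝ[X]).natDegree ≤ 1 := (natDegree_X_sub_C a).le
    rw [reflect_mul _ _ hf hg, ih, aux_reflect_one, ← pow_succ]

private lemma aux_rootMult {p : Polynomial ℝ} {d : ℕ} (hp : p ≠ 0)
    (hd : p.natDegree ≤ d) (hrefl : p.reflect d = p) {a : ℝ} (ha : a ≠ 0) :
    rootMultiplicity a p ≤ rootMultiplicity a⁻¹ p := by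
  set m := rootMultiplicity a p with hm
  obtain ⟨u, hu⟩ := p.pow_rootMultiplicity_dvd a
  rw [← hm] at hu
  have hu0 : u ≠ 0 := by rintro rfl; rw [mul_zero] at hu; exact hp hu
  have hXa : ((X - C a : ℝ[X]) ^ m) ≠ 0 := pow_ne_zero _ (X_sub_C_ne_zero a)
  have hdeg : p.natDegree = m + u.natDegree := by
    rw [hu, natDegree_mul hXa hu0, natDegree_pow, natDegree_X_sub_C, mul_one]
  have hmd : m ≤ d := le_trans (by omega) hd
  have hud : u.natDegree ≤ d - m := by omega
  have hsum : m + (d - m) = d := by omega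
  have href2 : p = reflect m ((X - C a) ^ m) * reflect (d - m) u := by
    conv_lhs => rw [← hrefl, hu, ← hsum]
    have hf2 : ((X - C a : ℝ[X]) ^ m).natDegree ≤ m := by
      have h := natDegree_pow_le (p := (X - C a : ℝ[X])) (n := m)
      rwa [natDegree_X_sub_C, mul_one] at h
    exact reflect_mul _ _ hf2 hud
  have hfact : (1 - C a * X : ℝ[X]) = (-C a) * (X - C a⁻¹) := by
    have h1 : (C a : ℝ[X]) * C a⁻¹ = 1 := by rw [← C_mul, mul_inv_cancel₀ ha, C_1]
    calc (1 - C a * X : ℝ[X]) = C a * C a⁻¹ - C a * X := by rw [h1]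
    _ = (-C a) * (X - C a⁻¹) := by ring
  rw [aux_reflect_pow, hfact, mul_pow] at href2
  have hdvd : (X - C a⁻¹ : ℝ[X]) ^ m ∣ p :=
    ⟨(-C a) ^ m * reflect (d - m) u, by rw [href2]; ring⟩
  exact (le_rootMultiplicity_iff hp).mpr hdvd

/-- Charney–Davis sign: let `h(t) = ∑_{i=0}^{d} h_i t^i` be a real-rooted
polynomial with non-negative coefficients, `h_0 = 1`, and reciprocal coefficients
`h_i = h_{d−i}`. Then `(−1)^{⌊d/2⌋} h(−1) ≥ 0`. -/
theorem charney_davis_sign (d : ℕ) (p : Polynomial ℝ)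
    (hdeg : p.natDegree ≤ d)
    (h0 : p.coeff 0 = 1)
    (hnn : ∀ i, 0 ≤ p.coeff i)
    (hrec : ∀ i ≤ d, p.coeff i = p.coeff (d - i))
    (hreal : ∀ z : ℂ, Polynomial.aeval z p = 0 → ∃ x : ℝ, z = (x : ℂ)) :
    0 ≤ (-1 : ℝ) ^ (d / 2) * p.eval (-1) := by
  classical
  have hp0 : p ≠ 0 := by
    intro h; rw [h] at h0; simp at h0
  have hcd : p.coeff d = 1 := by
    have := hrec d le_rfl; rw [Nat.sub_self] at this; rw [this, h0]
  have hnd : p.natDegree = d :=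
    le_antisymm hdeg (le_natDegree_of_ne_zero (by rw [hcd]; exact one_ne_zero))
  have hmonic : p.Monic := by
    unfold Polynomial.Monic Polynomial.leadingCoeff
    rw [hnd, hcd]
  -- reflect identity
  have hrefl : p.reflect d = p := by
    ext i
    rw [coeff_reflect]
    rcases le_or_gt i d with hi | hi
    · rw [revAt_le hi, ← hrec i hi]
    · have h1 : revAt d i = i := by
        rw [← revAtFun_eq]; unfold Polynomial.revAtFun
        rw [if_neg (by omega)]
      rw [h1]
  -- all real roots are negative
  have hneg : ∀ r ∈ p.roots, r < 0 := by
    intro r hr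
    have hroot : p.eval r = 0 := (mem_roots hp0).mp hr
    by_contra hge
    push_neg at hge
    have : (1 : ℝ) ≤ p.eval r := by
      rw [eval_eq_sum_range]
      have h00 : (0 : ℕ) ∈ Finset.range (p.natDegree + 1) := by simp
      calc (1 : ℝ) = p.coeff 0 * r ^ 0 := by rw [h0]; simp
      _ ≤ ∑ i ∈ Finset.range (p.natDegree + 1), p.coeff i * r ^ i :=
        Finset.single_le_sum (fun i _ => mul_nonneg (hnn i) (pow_nonneg hge i)) h00
    rw [hroot] at this; linarith
  -- card of roots = d
  have hmapne : p.map (algebraMap ℝ ℂ) ≠ 0 :=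
    (Polynomial.map_ne_zero_iff (algebraMap ℝ ℂ).injective).mpr hp0
  have hmapdeg : (p.map (algebraMap ℝ ℂ)).natDegree = d := by
    rw [natDegree_map_eq_of_injective (algebraMap ℝ ℂ).injective, hnd]
  have hQcard : (p.map (algebraMap ℝ ℂ)).roots.card = d := by
    rw [← hmapdeg]
    exact (splits_iff_card_roots).mp (IsAlgClosed.splits _)
  have hQle : (p.map (algebraMap ℝ ℂ)).roots ≤ p.roots.map (algebraMap ℝ ℂ) := by
    rw [Multiset.le_iff_count]
    intro z
    by_cases hz : z ∈ (p.map (algebraMap ℝ ℂ)).roots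
    · have hzr : Polynomial.aeval z p = 0 := by
        have := (mem_roots hmapne).mp hz
        rwa [Polynomial.IsRoot, Polynomial.eval_map, ← Polynomial.aeval_def] at this
      obtain ⟨x, rfl⟩ := hreal z hzr
      have h1 : ((p.map (algebraMap ℝ ℂ)).roots.count ((algebraMap ℝ ℂ) x))
          = rootMultiplicity x p := by
        rw [count_roots, eq_rootMultiplicity_map (algebraMap ℝ ℂ).injective]
      have h2 : (p.roots.map (algebraMap ℝ ℂ)).count ((algebraMap ℝ ℂ) x)
          = rootMultiplicity x p := by
        rw [Multiset.count_map_eq_count' _ _ (algebraMap ℝ ℂ).injective, count_roots]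
      have hxa : ((x : ℂ)) = (algebraMap ℝ ℂ) x := rfl
      rw [hxa, h1, h2]
    · rw [Multiset.count_eq_zero_of_notMem hz]
      exact Nat.zero_le _
  have hRcard : p.roots.card = d := by
    have h1 : d ≤ p.roots.card := by
      have := Multiset.card_le_card hQle
      rwa [hQcard, Multiset.card_map] at this
    have h2 : p.roots.card ≤ d := hnd ▸ p.card_roots'
    exact le_antisymm h2 h1
  -- factorization
  have hfac : (p.roots.map fun a => X - C a).prod = p := by
    have := Polynomial.C_leadingCoeff_mul_prod_multiset_X_sub_C (p := p) (hRcard.trans hnd.symm)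
    rwa [hmonic.leadingCoeff, C_1, one_mul] at this
  -- roots are inversion-invariant
  have hinvle : p.roots.map (fun r => r⁻¹) ≤ p.roots := by
    rw [Multiset.le_iff_count]
    intro a
    have hcm : (p.roots.map (fun r => r⁻¹)).count a = p.roots.count a⁻¹ := by
      have : a = (a⁻¹)⁻¹ := (inv_inv a).symm
      conv_lhs => rw [this]
      exact Multiset.count_map_eq_count' _ _ inv_injective _
    rw [hcm, count_roots, count_roots]
    by_cases ha : a = 0
    · rw [ha, inv_zero]
    · have ha' : a⁻¹ ≠ 0 := inv_ne_zero ha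
      have := aux_rootMult hp0 hdeg hrefl ha'
      rwa [inv_inv] at this
  have hinv : p.roots.map (fun r => r⁻¹) = p.roots :=
    Multiset.eq_of_le_of_card_le hinvle (by rw [Multiset.card_map])
  -- main case split
  by_cases hm1 : (-1 : ℝ) ∈ p.roots
  · have : p.eval (-1) = 0 := (mem_roots hp0).mp hm1
    rw [this, mul_zero]
  · -- -1 is not a root; count roots in (-1, 0)
    have hne1 : ∀ r ∈ p.roots, r ≠ -1 := fun r hr h => hm1 (h ▸ hr)
    have hBA : (p.roots.filter (fun r => -1 < r)).card
        = (p.roots.filter (fun r => r < -1)).card := by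
      conv_lhs => rw [← hinv, Multiset.filter_map]
      rw [Multiset.card_map]
      congr 1
      apply Multiset.filter_congr
      intro r hr
      have hr0 : r < 0 := hneg r hr
      have hrr : r * r⁻¹ = 1 := mul_inv_cancel₀ (ne_of_lt hr0)
      simp only [Function.comp]
      constructor
      · intro h; nlinarith
      · intro h; nlinarith
    have hpart : (p.roots.filter (fun r => r < -1)).card
        + (p.roots.filter (fun r => -1 < r)).card = d := by
      have h1 : p.roots.filter (fun r => ¬ r < -1) = p.roots.filter (fun r => -1 < r) := by
        apply Multiset.filter_congr
        intro r hr
        have := hne1 r hr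
        constructor
        · intro h; rcases lt_or_eq_of_le (not_lt.mp h) with h' | h'
          · exact h'
          · exact absurd h'.symm this
        · intro h; exact not_lt.mpr (le_of_lt h)
      have h2 := Multiset.filter_add_not (fun r => r < -1) p.roots
      rw [h1] at h2
      have := congrArg Multiset.card h2
      rwa [Multiset.card_add, hRcard] at this
    have hBcard : (p.roots.filter (fun r => -1 < r)).card = d / 2 := by omega
    -- evaluate
    have heval : p.eval (-1) = (p.roots.map (fun r => -1 - r)).prod := by
      conv_lhs => rw [← hfac]
      rw [eval_multiset_prod, Multiset.map_map]
      congr 1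
      apply Multiset.map_congr rfl
      intro r _
      simp
    rw [heval]
    have hs := aux_sign (p.roots.map (fun r => -1 - r))
    have hcs : ((p.roots.map (fun r => -1 - r)).filter (fun x => x < 0)).card
        = (p.roots.filter (fun r => -1 < r)).card := by
      rw [Multiset.filter_map, Multiset.card_map]
      congr 1
      apply Multiset.filter_congr
      intro r _
      simp only [Function.comp]
      constructor
      · intro h; linarith
      · intro h; linarith
    rw [hcs, hBcard] at hs
    exact hs
end
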